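/- arXiv:2008.10579 — 4 statements merged into one kernel-verified Lean document; each statement's English description precedes it below -/
import Mathlib

section
/- Fix 0 < ε < 1 and let z, w ∈ ℝ^n be unit vectors. If z̃, w̃ ∈ ℝ^n are unit vectors with ‖z̃ − z‖ ≤ ε and ‖w̃ − w‖ ≤ ε, then ‖Φ_{z̃,w̃} − Φ_{z,w}‖ ≤ (88/π) ε in spectral norm. -/
open scoped BigOperators ENNReal NNReal RealInnerProductSpace Matrix
open MeasureTheory ProbabilityTheory Real Filter

noncomputable section

namespace DPR

attribute [local instance] Classical.propDecidable

/-- Entrywise ReLU on Euclidean space. -/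
def reluE {p : ℕ} (v : EuclideanSpace ℝ (Fin p)) : EuclideanSpace ℝ (Fin p) :=
  WithLp.toLp 2 (fun i => max (v i) 0)

/-- Entrywise absolute value. -/
def absVecE {p : ℕ} (v : EuclideanSpace ℝ (Fin p)) : EuclideanSpace ℝ (Fin p) :=
  WithLp.toLp 2 (fun i => |v i|)

/-- Matrix–vector multiplication as a map between Euclidean spaces. -/
def mulVecE {p q : ℕ} (M : Matrix (Fin p) (Fin q) ℝ) (x : EuclideanSpace ℝ (Fin q)) :
    EuclideanSpace ℝ (Fin p) :=
  WithLp.toLp 2 (M.mulVec x)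

/-- The `ℓ`-th row of a matrix, as a Euclidean vector. -/
def rowE {p q : ℕ} (A : Matrix (Fin p) (Fin q) ℝ) (ℓ : Fin p) : EuclideanSpace ℝ (Fin q) :=
  WithLp.toLp 2 (fun j => A ℓ j)

/-- Spectral norm of a matrix (operator norm between Euclidean spaces). -/
def specNorm {p q : ℕ} (M : Matrix (Fin p) (Fin q) ℝ) : ℝ :=
  ‖LinearMap.toContinuousLinearMap (Matrix.toEuclideanLin M)‖

/-- Angle between two vectors. -/
def ang {p : ℕ} (x y : EuclideanSpace ℝ (Fin p)) : ℝ :=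
  Real.arccos (⟪x, y⟫ / (‖x‖ * ‖y‖))

/-- The matrix `M_{x̂ ↔ ŷ}` sending `x̂ ↦ ŷ`, `ŷ ↦ x̂`, and `span{x,y}ᗮ ↦ 0`. -/
def Mmat {p : ℕ} (x y : EuclideanSpace ℝ (Fin p)) : Matrix (Fin p) (Fin p) ℝ :=
  let xh : Fin p → ℝ := fun i => x i / ‖x‖
  let yh : Fin p → ℝ := fun i => y i / ‖y‖
  if ang x y = 0 then Matrix.vecMulVec xh xh
  else if ang x y = π then -(Matrix.vecMulVec xh xh)
  else ((Real.sin (ang x y)) ^ 2)⁻¹ •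
    (Matrix.vecMulVec xh yh + Matrix.vecMulVec yh xh
      - Real.cos (ang x y) • (Matrix.vecMulVec xh xh + Matrix.vecMulVec yh yh))

/-- The matrix `Q_{x,y}`. -/
def Qmat {p : ℕ} (x y : EuclideanSpace ℝ (Fin p)) : Matrix (Fin p) (Fin p) ℝ :=
  ((π - ang x y) / (2 * π)) • (1 : Matrix (Fin p) (Fin p) ℝ)
    + (Real.sin (ang x y) / (2 * π)) • Mmat x y

/-- `W_{+,x} = diag(Wx > 0) W`. -/
def Wplus {p q : ℕ} (W : Matrix (Fin p) (Fin q) ℝ) (x : EuclideanSpace ℝ (Fin q)) :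
    Matrix (Fin p) (Fin q) ℝ :=
  Matrix.diagonal (fun i => if 0 < W.mulVec x i then (1 : ℝ) else 0) * W

/-- The Weight Distribution Condition with constant `ε`. -/
def WDC {p q : ℕ} (W : Matrix (Fin p) (Fin q) ℝ) (ε : ℝ) : Prop :=
  ∀ x y : EuclideanSpace ℝ (Fin q), x ≠ 0 → y ≠ 0 →
    specNorm ((Wplus W x)ᵀ * Wplus W y - Qmat x y) ≤ ε

/-- `A_z = diag(sgn(Az)) A`. -/
def Asign {p q : ℕ} (A : Matrix (Fin p) (Fin q) ℝ) (z : EuclideanSpace ℝ (Fin q)) :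
    Matrix (Fin p) (Fin q) ℝ :=
  Matrix.diagonal (fun i => Real.sign (A.mulVec z i)) * A

/-- The matrix `Φ_{z,w}`. -/
def Phi {p : ℕ} (z w : EuclideanSpace ℝ (Fin p)) : Matrix (Fin p) (Fin p) ℝ :=
  if z ≠ 0 ∧ w ≠ 0 then
    ((π - 2 * ang z w) / π) • (1 : Matrix (Fin p) (Fin p) ℝ)
      + (2 * Real.sin (ang z w) / π) • Mmat z w
  else 0

/-- The generative network `G` with layer sizes `n 0, n 1, …, n d` and ReLU activations. -/
def net (n : ℕ → ℕ) : ∀ d : ℕ,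
    (∀ i : Fin d, Matrix (Fin (n (i + 1))) (Fin (n i)) ℝ) →
    EuclideanSpace ℝ (Fin (n 0)) → EuclideanSpace ℝ (Fin (n d))
  | 0, _, x => x
  | (d + 1), W, x => reluE (mulVecE (W (Fin.last d)) (net n d (fun i => W i.castSucc) x))

/-- The Range Restricted Concentration Property of `A` with respect to the net, with constant `ε`. -/
def RRCP (n : ℕ → ℕ) (d m : ℕ)
    (W : ∀ i : Fin d, Matrix (Fin (n (i + 1))) (Fin (n i)) ℝ)
    (A : Matrix (Fin m) (Fin (n d)) ℝ) (ε : ℝ) : Prop :=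
  ∀ x y x₁ x₂ x₃ x₄ : EuclideanSpace ℝ (Fin (n 0)),
    |⟪mulVecE ((Asign A (net n d W x))ᵀ * Asign A (net n d W y)
          - Phi (net n d W x) (net n d W y))
        (net n d W x₁ - net n d W x₂), net n d W x₃ - net n d W x₄⟫|
      ≤ 33 * ε * ‖net n d W x₁ - net n d W x₂‖ * ‖net n d W x₃ - net n d W x₄‖

/-- The objective function `f(x) = ½‖|A G(x)| − (|A G(x⋆)| + η)‖²`. -/
def objf (n : ℕ → ℕ) (d m : ℕ)
    (W : ∀ i : Fin d, Matrix (Fin (n (i + 1))) (Fin (n i)) ℝ)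
    (A : Matrix (Fin m) (Fin (n d)) ℝ)
    (xstar : EuclideanSpace ℝ (Fin (n 0))) (η : EuclideanSpace ℝ (Fin m))
    (x : EuclideanSpace ℝ (Fin (n 0))) : ℝ :=
  (1 / 2) * ‖absVecE (mulVecE A (net n d W x))
      - (absVecE (mulVecE A (net n d W xstar)) + η)‖ ^ 2

/-- Clarke generalized directional derivative. -/
def clarkeDeriv {k : ℕ} (f : EuclideanSpace ℝ (Fin k) → ℝ) (x u : EuclideanSpace ℝ (Fin k)) : ℝ :=
  Filter.limsup (fun p : EuclideanSpace ℝ (Fin k) × ℝ => (f (p.1 + p.2 • u) - f p.1) / p.2)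
    ((nhds x) ×ˢ (nhdsWithin 0 (Set.Ioi 0)))

/-- Clarke subdifferential. -/
def clarkeSubdiff {k : ℕ} (f : EuclideanSpace ℝ (Fin k) → ℝ) (x : EuclideanSpace ℝ (Fin k)) :
    Set (EuclideanSpace ℝ (Fin k)) :=
  {v | ∀ u, ⟪v, u⟫ ≤ clarkeDeriv f x u}

/-- The negation step of the DPR algorithm. -/
def negStep {k : ℕ} (f : EuclideanSpace ℝ (Fin k) → ℝ) (y : EuclideanSpace ℝ (Fin k)) :
    EuclideanSpace ℝ (Fin k) :=
  if f (-y) < f y then -y else y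

/-- `x` is a run of the DPR subgradient method for `f` with step size `α`. -/
def IsDPR {k : ℕ} (f : EuclideanSpace ℝ (Fin k) → ℝ) (α : ℝ)
    (x : ℕ → EuclideanSpace ℝ (Fin k)) : Prop :=
  ∀ t : ℕ, ∃ v ∈ clarkeSubdiff f (negStep f (x t)), x (t + 1) = negStep f (x t) - α • v

/-- The function `g`. -/
def gfun (θ : ℝ) : ℝ := Real.arccos (((π - θ) * Real.cos θ + Real.sin θ) / π)

/-- `θ̄_{i,x}`. -/
def thetaBar {k : ℕ} (xstar x : EuclideanSpace ℝ (Fin k)) : ℕ → ℝ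
  | 0 => ang x xstar
  | (i + 1) => gfun (thetaBar xstar x i)

/-- `θ̆_i`. -/
def thetaCheck : ℕ → ℝ
  | 0 => π
  | (i + 1) => gfun (thetaCheck i)

/-- `ρ_d`. -/
def rho (d : ℕ) : ℝ :=
  2 * Real.sin (thetaCheck d) / π
    + ((π - 2 * thetaCheck d) / π) *
      ∑ i ∈ Finset.range d, (Real.sin (thetaCheck i) / π) *
        ∏ j ∈ Finset.Ico (i + 1) d, (π - thetaCheck j) / π

/-- The vector `h_x`. -/
def hvec {k : ℕ} (d : ℕ) (xstar x : EuclideanSpace ℝ (Fin k)) : EuclideanSpace ℝ (Fin k) :=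
  ((2 : ℝ) ^ d)⁻¹ •
    ((((π - 2 * thetaBar xstar x d) / π)
        * (∏ i ∈ Finset.range d, (π - thetaBar xstar x i) / π) * ‖xstar‖) • (‖xstar‖⁻¹ • xstar)
      + (‖x‖ - ‖xstar‖ * (2 * Real.sin (thetaBar xstar x d) / π
          + ((π - 2 * thetaBar xstar x d) / π) *
            ∑ i ∈ Finset.range d, (Real.sin (thetaBar xstar x i) / π) *
              ∏ j ∈ Finset.Ico (i + 1) d, (π - thetaBar xstar x j) / π)) • (‖x‖⁻¹ • x))

/-- The set `S_β`. -/
def Sset {k : ℕ} (d : ℕ) (xstar : EuclideanSpace ℝ (Fin k)) (β : ℝ) :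
    Set (EuclideanSpace ℝ (Fin k)) :=
  {x | x ≠ 0 ∧ ‖hvec d xstar x‖ ≤ ((2 : ℝ) ^ d)⁻¹ * β * max ‖x‖ ‖xstar‖}

/-- The law of a `p × q` random matrix with i.i.d. `N(0, v)` entries. -/
def gaussMatrix (p q : ℕ) (v : ℝ≥0) : Measure (Fin p → Fin q → ℝ) :=
  Measure.pi fun _ : Fin p => Measure.pi fun _ : Fin q => gaussianReal 0 v

/-- The joint law of the independent Gaussian weights `W_1, …, W_d` (with `W_i` having
i.i.d. `N(0, 1/n_i)` entries) and the Gaussian measurement matrix `A` (with i.i.d.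
`N(0, 1/m)` entries). -/
def netMeasure (n : ℕ → ℕ) (d m : ℕ) :
    Measure ((∀ i : Fin d, Fin (n (i + 1)) → Fin (n i) → ℝ) × (Fin m → Fin (n d) → ℝ)) :=
  (Measure.pi fun i : Fin d => gaussMatrix (n (i + 1)) (n i) ((n (i + 1) : ℝ≥0))⁻¹).prod
    (gaussMatrix m (n d) ((m : ℝ≥0))⁻¹)


/-! ### Auxiliary lemmas for statement 6 -/

section Statement6Aux

variable {p : ℕ}

lemma specNorm_zero' {q : ℕ} : specNorm (0 : Matrix (Fin p) (Fin q) ℝ) = 0 := by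
  simp only [specNorm, map_zero, norm_zero]

lemma specNorm_nonneg' {q : ℕ} (M : Matrix (Fin p) (Fin q) ℝ) : 0 ≤ specNorm M :=
  norm_nonneg _

lemma specNorm_add_le {q : ℕ} (A B : Matrix (Fin p) (Fin q) ℝ) :
    specNorm (A + B) ≤ specNorm A + specNorm B := by
  simp only [specNorm, map_add]
  exact norm_add_le _ _

lemma specNorm_smul {q : ℕ} (c : ℝ) (A : Matrix (Fin p) (Fin q) ℝ) :
    specNorm (c • A) = |c| * specNorm A := by
  simp only [specNorm, _root_.map_smul]
  have := norm_smul c (LinearMap.toContinuousLinearMap (Matrix.toEuclideanLin A))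
  simpa using this

lemma specNorm_neg {q : ℕ} (A : Matrix (Fin p) (Fin q) ℝ) : specNorm (-A) = specNorm A := by
  simp only [specNorm, map_neg, norm_neg]

lemma specNorm_sub_rev {q : ℕ} (A B : Matrix (Fin p) (Fin q) ℝ) :
    specNorm (A - B) = specNorm (B - A) := by
  rw [← specNorm_neg, neg_sub]

lemma specNorm_sub_le {q : ℕ} (A B : Matrix (Fin p) (Fin q) ℝ) :
    specNorm (A - B) ≤ specNorm A + specNorm B := by
  rw [sub_eq_add_neg]
  refine (specNorm_add_le _ _).trans ?_
  rw [specNorm_neg]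

lemma specNorm_one_le : specNorm (1 : Matrix (Fin p) (Fin p) ℝ) ≤ 1 := by
  apply ContinuousLinearMap.opNorm_le_bound _ zero_le_one
  intro x
  simp [Matrix.toEuclideanLin_apply, Matrix.one_mulVec]

lemma specNorm_vecMulVec_le (a b : EuclideanSpace ℝ (Fin p)) :
    specNorm (Matrix.vecMulVec (a : Fin p → ℝ) b) ≤ ‖a‖ * ‖b‖ := by
  apply ContinuousLinearMap.opNorm_le_bound _ (by positivity)
  intro x
  have h1 : Matrix.vecMulVec (a : Fin p → ℝ) b *ᵥ (x : Fin p → ℝ)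
      = ((b : Fin p → ℝ) ⬝ᵥ (x : Fin p → ℝ)) • (a : Fin p → ℝ) := by
    ext i
    simp [Matrix.vecMulVec, Matrix.mulVec, dotProduct, Finset.mul_sum, mul_comm,
      mul_assoc, mul_left_comm]
  have h2 : (b : Fin p → ℝ) ⬝ᵥ (x : Fin p → ℝ) = ⟪b, x⟫ := by
    simp [dotProduct, PiLp.inner_apply, RCLike.inner_apply, mul_comm]
  rw [LinearMap.coe_toContinuousLinearMap', Matrix.toEuclideanLin_apply, h1, h2]
  have h3 : WithLp.toLp 2 (⟪b, x⟫ • (a : Fin p → ℝ)) = ⟪b,x⟫ • a := rfl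
  rw [h3, norm_smul]
  have := abs_real_inner_le_norm b x
  simp only [Real.norm_eq_abs]
  calc |⟪b,x⟫| * ‖a‖ ≤ (‖b‖ * ‖x‖) * ‖a‖ := by
        apply mul_le_mul_of_nonneg_right this (norm_nonneg _)
    _ = ‖a‖ * ‖b‖ * ‖x‖ := by ring

/-- Scaled rank-one projection `‖v‖⁻¹ • v vᵀ`. -/
def nrmM (v : EuclideanSpace ℝ (Fin p)) : Matrix (Fin p) (Fin p) ℝ :=
  ‖v‖⁻¹ • Matrix.vecMulVec (v : Fin p → ℝ) v

lemma nrmM_zero : nrmM (0 : EuclideanSpace ℝ (Fin p)) = 0 := by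
  ext i j
  simp [nrmM, Matrix.vecMulVec_apply]

lemma specNorm_nrmM_le (v : EuclideanSpace ℝ (Fin p)) : specNorm (nrmM v) ≤ ‖v‖ := by
  rcases eq_or_ne v 0 with h | h
  · simp [h, nrmM_zero, specNorm_zero']
  · have hv : 0 < ‖v‖ := norm_pos_iff.2 h
    rw [nrmM, specNorm_smul, abs_of_nonneg (by positivity)]
    calc ‖v‖⁻¹ * specNorm (Matrix.vecMulVec (v : Fin p → ℝ) v)
        ≤ ‖v‖⁻¹ * (‖v‖ * ‖v‖) := by
          exact mul_le_mul_of_nonneg_left (specNorm_vecMulVec_le v v) (by positivity)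
      _ = ‖v‖ := by field_simp

lemma nrmM_sub_eq (u v : EuclideanSpace ℝ (Fin p)) :
    nrmM u - nrmM v = ‖u‖⁻¹ • (Matrix.vecMulVec (u : Fin p → ℝ) ((u - v : EuclideanSpace ℝ (Fin p)) : Fin p → ℝ)
        + Matrix.vecMulVec ((u - v : EuclideanSpace ℝ (Fin p)) : Fin p → ℝ) (v : Fin p → ℝ))
      + (‖u‖⁻¹ - ‖v‖⁻¹) • Matrix.vecMulVec (v : Fin p → ℝ) v := by
  ext i j
  have hs : ((u - v : EuclideanSpace ℝ (Fin p)) : Fin p → ℝ) i = u i - v i := rfl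
  have hs' : ((u - v : EuclideanSpace ℝ (Fin p)) : Fin p → ℝ) j = u j - v j := rfl
  simp [nrmM, Matrix.vecMulVec_apply, Matrix.add_apply, Matrix.sub_apply, Matrix.smul_apply,
    smul_eq_mul, hs, hs']
  ring

lemma nrmM_lip_aux (u v : EuclideanSpace ℝ (Fin p)) (h : ‖v‖ ≤ ‖u‖) :
    specNorm (nrmM u - nrmM v) ≤ 3 * ‖u - v‖ := by
  rcases eq_or_ne u 0 with h0 | h0
  · have hv : v = 0 := by rw [h0] at h; simpa using h
    simp [h0, hv, nrmM_zero, specNorm_zero']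
  · have hu : 0 < ‖u‖ := norm_pos_iff.2 h0
    set d := ‖u - v‖ with hd
    have hd0 : 0 ≤ d := norm_nonneg _
    have hdn : ‖u‖ - ‖v‖ ≤ d := by
      simpa [hd] using norm_sub_norm_le u v
    rw [nrmM_sub_eq]
    have t1 : specNorm ((‖u‖)⁻¹ • (Matrix.vecMulVec (u : Fin p → ℝ) ((u - v : EuclideanSpace ℝ (Fin p)) : Fin p → ℝ)
        + Matrix.vecMulVec ((u - v : EuclideanSpace ℝ (Fin p)) : Fin p → ℝ) (v : Fin p → ℝ)))
        ≤ 2 * d := by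
      rw [specNorm_smul, abs_of_nonneg (by positivity)]
      have b1 := specNorm_vecMulVec_le u (u - v)
      have b2 := specNorm_vecMulVec_le (u - v) v
      have b3 := specNorm_add_le (Matrix.vecMulVec (u : Fin p → ℝ) ((u - v : EuclideanSpace ℝ (Fin p)) : Fin p → ℝ))
        (Matrix.vecMulVec ((u - v : EuclideanSpace ℝ (Fin p)) : Fin p → ℝ) (v : Fin p → ℝ))
      have hb : specNorm (Matrix.vecMulVec (u : Fin p → ℝ) ((u - v : EuclideanSpace ℝ (Fin p)) : Fin p → ℝ)
        + Matrix.vecMulVec ((u - v : EuclideanSpace ℝ (Fin p)) : Fin p → ℝ) (v : Fin p → ℝ)) ≤ ‖u‖ * d + d * ‖v‖ := by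
        calc _ ≤ _ := b3
          _ ≤ ‖u‖ * d + d * ‖v‖ := by exact add_le_add b1 b2
      calc (‖u‖)⁻¹ * specNorm _ ≤ (‖u‖)⁻¹ * (‖u‖ * d + d * ‖v‖) := by
            exact mul_le_mul_of_nonneg_left hb (by positivity)
        _ ≤ (‖u‖)⁻¹ * (‖u‖ * d + d * ‖u‖) := by
            apply mul_le_mul_of_nonneg_left _ (by positivity)
            have : d * ‖v‖ ≤ d * ‖u‖ := mul_le_mul_of_nonneg_left h hd0
            linarith
        _ = 2 * d := by field_simp; ring
    have t2 : specNorm ((‖u‖⁻¹ - ‖v‖⁻¹) • Matrix.vecMulVec (v : Fin p → ℝ) v) ≤ d := by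
      rw [specNorm_smul]
      rcases eq_or_ne v 0 with hv0 | hv0
      · have : ‖v‖ = 0 := by simp [hv0]
        calc |‖u‖⁻¹ - ‖v‖⁻¹| * specNorm (Matrix.vecMulVec (v : Fin p → ℝ) v)
            ≤ |‖u‖⁻¹ - ‖v‖⁻¹| * (‖v‖ * ‖v‖) :=
              mul_le_mul_of_nonneg_left (specNorm_vecMulVec_le v v) (abs_nonneg _)
          _ = 0 := by rw [this]; ring
          _ ≤ d := hd0
      · have hv : 0 < ‖v‖ := norm_pos_iff.2 hv0
        have habs : |‖u‖⁻¹ - ‖v‖⁻¹| = (‖u‖ - ‖v‖) / (‖u‖ * ‖v‖) := by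
          rw [abs_of_nonpos (by
            have : ‖u‖⁻¹ ≤ ‖v‖⁻¹ := by exact inv_anti₀ hv h
            linarith)]
          field_simp
          ring
        calc |‖u‖⁻¹ - ‖v‖⁻¹| * specNorm (Matrix.vecMulVec (v : Fin p → ℝ) v)
            ≤ |‖u‖⁻¹ - ‖v‖⁻¹| * (‖v‖ * ‖v‖) :=
              mul_le_mul_of_nonneg_left (specNorm_vecMulVec_le v v) (abs_nonneg _)
          _ = (‖u‖ - ‖v‖) * (‖v‖ / ‖u‖) := by rw [habs]; field_simp
          _ ≤ d * 1 := mul_le_mul hdn (by rw [div_le_one hu]; exact h) (by positivity) hd0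
          _ = d := mul_one d
    calc specNorm _ ≤ _ + _ := specNorm_add_le _ _
      _ ≤ 2 * d + d := add_le_add t1 t2
      _ = 3 * d := by ring

lemma nrmM_lip (u v : EuclideanSpace ℝ (Fin p)) :
    specNorm (nrmM u - nrmM v) ≤ 3 * ‖u - v‖ := by
  rcases le_total ‖v‖ ‖u‖ with h | h
  · exact nrmM_lip_aux u v h
  · rw [specNorm_sub_rev, norm_sub_rev]
    exact nrmM_lip_aux v u h

/-- Continuous surrogate for `sin θ • M`. -/
def Gmat (z w : EuclideanSpace ℝ (Fin p)) : Matrix (Fin p) (Fin p) ℝ :=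
  (‖z - w‖ / 2) • nrmM (z + w) - (‖z + w‖ / 2) • nrmM (z - w)

lemma smul_nrmM_pair (t t' : ℝ) (v v' : EuclideanSpace ℝ (Fin p)) :
    specNorm (t' • nrmM v' - t • nrmM v)
      ≤ |t'| * (3 * ‖v' - v‖) + |t' - t| * ‖v‖ := by
  have hdec : t' • nrmM v' - t • nrmM v
      = t' • (nrmM v' - nrmM v) + (t' - t) • nrmM v := by module
  rw [hdec]
  calc specNorm _ ≤ _ + _ := specNorm_add_le _ _
    _ ≤ |t'| * (3 * ‖v' - v‖) + |t' - t| * ‖v‖ := by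
        rw [specNorm_smul, specNorm_smul]
        exact add_le_add
          (mul_le_mul_of_nonneg_left (nrmM_lip v' v) (abs_nonneg _))
          (mul_le_mul_of_nonneg_left (specNorm_nrmM_le v) (abs_nonneg _))

lemma ang_nonneg (x y : EuclideanSpace ℝ (Fin p)) : 0 ≤ ang x y := Real.arccos_nonneg _
lemma ang_le_pi' (x y : EuclideanSpace ℝ (Fin p)) : ang x y ≤ π := Real.arccos_le_pi _
lemma ang_comm (x y : EuclideanSpace ℝ (Fin p)) : ang x y = ang y x := by
  rw [ang, ang, real_inner_comm, mul_comm]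

lemma arccos_antitone : Antitone Real.arccos := fun u v h => by
  simp only [Real.arccos]
  linarith [Real.monotone_arcsin h]

lemma arccos_le_of_cos_le {t c : ℝ} (ht0 : 0 ≤ t) (htpi : t ≤ π) (h : Real.cos t ≤ c) :
    Real.arccos c ≤ t := by
  calc Real.arccos c ≤ Real.arccos (Real.cos t) := arccos_antitone h
    _ = t := Real.arccos_cos ht0 htpi

lemma ang_eq_arccos {x y : EuclideanSpace ℝ (Fin p)} (hx : ‖x‖ = 1) (hy : ‖y‖ = 1) :
    ang x y = Real.arccos ⟪x, y⟫ := by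
  simp only [ang, hx, hy, mul_one, div_one]

lemma inner_abs_le_one {x y : EuclideanSpace ℝ (Fin p)} (hx : ‖x‖ = 1) (hy : ‖y‖ = 1) :
    |⟪x, y⟫| ≤ 1 := by
  have := abs_real_inner_le_norm x y; simpa [hx, hy] using this

lemma cos_ang {x y : EuclideanSpace ℝ (Fin p)} (hx : ‖x‖ = 1) (hy : ‖y‖ = 1) :
    Real.cos (ang x y) = ⟪x, y⟫ := by
  have h := inner_abs_le_one hx hy
  rw [ang_eq_arccos hx hy, Real.cos_arccos (by linarith [abs_le.1 h]) (by linarith [abs_le.1 h])]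

lemma sin_ang {x y : EuclideanSpace ℝ (Fin p)} (hx : ‖x‖ = 1) (hy : ‖y‖ = 1) :
    Real.sin (ang x y) = Real.sqrt (1 - ⟪x, y⟫ ^ 2) := by
  rw [ang_eq_arccos hx hy, Real.sin_arccos]

/-- Triangle inequality for angles between unit vectors. -/
lemma ang_triangle (x y z : EuclideanSpace ℝ (Fin p))
    (hx : ‖x‖ = 1) (hy : ‖y‖ = 1) (hz : ‖z‖ = 1) :
    ang x z ≤ ang x y + ang y z := by
  by_cases hbig : π ≤ ang x y + ang y z
  · exact le_trans (ang_le_pi' x z) hbig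
  push_neg at hbig
  have hsum0 : 0 ≤ ang x y + ang y z := by
    have := ang_nonneg x y; have := ang_nonneg y z; linarith
  have ha1 := abs_le.1 (inner_abs_le_one hx hy)
  have hb1 := abs_le.1 (inner_abs_le_one hy hz)
  have hyy : ⟪y, y⟫ = (1:ℝ) := by
    rw [real_inner_self_eq_norm_sq, hy]; norm_num
  have hperp : ⟪x - ⟪x, y⟫ • y, z - ⟪y, z⟫ • y⟫ = ⟪x, z⟫ - ⟪x, y⟫ * ⟪y, z⟫ := by
    simp only [inner_sub_left, inner_sub_right, real_inner_smul_left, real_inner_smul_right,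
      hyy]
    rw [real_inner_comm y x]
    ring
  have hxn : ‖x - ⟪x, y⟫ • y‖ ^ 2 = 1 - ⟪x, y⟫ ^ 2 := by
    rw [norm_sub_sq_real, real_inner_smul_right, norm_smul, hx, hy]
    simp only [one_pow, mul_one, Real.norm_eq_abs, sq_abs]
    ring
  have hzn : ‖z - ⟪y, z⟫ • y‖ ^ 2 = 1 - ⟪y, z⟫ ^ 2 := by
    rw [norm_sub_sq_real, real_inner_smul_right, real_inner_comm z y, norm_smul, hz, hy]
    simp only [one_pow, mul_one, Real.norm_eq_abs, sq_abs]
    ring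
  have hxx : ‖x - ⟪x, y⟫ • y‖ = Real.sqrt (1 - ⟪x, y⟫ ^ 2) := by
    rw [← hxn, Real.sqrt_sq (norm_nonneg _)]
  have hzz : ‖z - ⟪y, z⟫ • y‖ = Real.sqrt (1 - ⟪y, z⟫ ^ 2) := by
    rw [← hzn, Real.sqrt_sq (norm_nonneg _)]
  have hCS : ⟪x, z⟫ - ⟪x, y⟫ * ⟪y, z⟫
      ≥ -(Real.sqrt (1 - ⟪x, y⟫ ^ 2) * Real.sqrt (1 - ⟪y, z⟫ ^ 2)) := by
    have h2 := abs_real_inner_le_norm (x - ⟪x, y⟫ • y) (z - ⟪y, z⟫ • y)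
    rw [hxx, hzz, hperp] at h2
    linarith [abs_le.1 h2]
  have hcos : Real.cos (ang x y + ang y z) ≤ ⟪x, z⟫ := by
    rw [Real.cos_add, cos_ang hx hy, cos_ang hy hz, sin_ang hx hy, sin_ang hy hz]
    linarith
  rw [ang_eq_arccos hx hz]
  exact arccos_le_of_cos_le hsum0 hbig.le hcos

/-- Chord bound: angle between unit vectors is at most `π/2` times the chord length. -/
lemma ang_le_chord (x y : EuclideanSpace ℝ (Fin p)) (hx : ‖x‖ = 1) (hy : ‖y‖ = 1) :
    ang x y ≤ π / 2 * ‖x - y‖ := by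
  set d : ℝ := ‖x - y‖ with hd
  have hd0 : 0 ≤ d := norm_nonneg _
  have hinner : ⟪x, y⟫ = 1 - d ^ 2 / 2 := by
    have h := norm_sub_sq_real x y
    rw [hx, hy] at h
    rw [← hd] at h
    linarith
  by_cases hd2 : 2 ≤ d
  · calc ang x y ≤ π := ang_le_pi' x y
      _ = π / 2 * 2 := by ring
      _ ≤ π / 2 * d := by
          apply mul_le_mul_of_nonneg_left hd2 (by positivity)
  push_neg at hd2
  have hrange : 0 ≤ π / 2 * d ∧ π / 2 * d ≤ π := by
    constructor
    · positivity
    · nlinarith [Real.pi_pos]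
  have hcos : Real.cos (π / 2 * d) ≤ 1 - d ^ 2 / 2 := by
    have hhalf : Real.cos (π / 2 * d) = 1 - 2 * Real.sin (π / 4 * d) ^ 2 := by
      have harg : π / 2 * d = 2 * (π / 4 * d) := by ring
      rw [harg, Real.cos_two_mul]
      have hsc := Real.sin_sq_add_cos_sq (π / 4 * d)
      linarith
    rw [hhalf]
    have hsin : d / 2 ≤ Real.sin (π / 4 * d) := by
      have h := Real.mul_le_sin (x := π / 4 * d) (by positivity) (by nlinarith [Real.pi_pos])
      calc d / 2 = 2 / π * (π / 4 * d) := by field_simp; ring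
        _ ≤ Real.sin (π / 4 * d) := h
    nlinarith [hsin, hd0]
  rw [ang_eq_arccos hx hy, hinner]
  exact arccos_le_of_cos_le hrange.1 hrange.2 hcos

/-- `sin θ • M` equals the continuous surrogate `Gmat` for unit vectors. -/
lemma sin_smul_Mmat (z w : EuclideanSpace ℝ (Fin p)) (hz : ‖z‖ = 1) (hw : ‖w‖ = 1) :
    Real.sin (ang z w) • Mmat z w = Gmat z w := by
  set c : ℝ := ⟪z, w⟫ with hc
  have hang : ang z w = Real.arccos c := by
    simp only [ang, hz, hw, mul_one, div_one]
    rfl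
  have hc1 : |c| ≤ 1 := by
    have := abs_real_inner_le_norm z w
    simpa [hz, hw] using this
  have hcos : Real.cos (ang z w) = c := by
    rw [hang, Real.cos_arccos (by linarith [abs_le.1 hc1]) (by linarith [abs_le.1 hc1])]
  have hsin : Real.sin (ang z w) = Real.sqrt (1 - c ^ 2) := by
    rw [hang, Real.sin_arccos]
  have hnp : ‖z + w‖ ^ 2 = 2 + 2 * c := by
    rw [norm_add_sq_real, hz, hw]; ring
  have hnq : ‖z - w‖ ^ 2 = 2 - 2 * c := by
    rw [norm_sub_sq_real, hz, hw]; ring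
  have hp : ‖z + w‖ = Real.sqrt (2 + 2 * c) := by
    rw [← hnp, Real.sqrt_sq (norm_nonneg _)]
  have hq : ‖z - w‖ = Real.sqrt (2 - 2 * c) := by
    rw [← hnq, Real.sqrt_sq (norm_nonneg _)]
  rcases eq_or_ne (ang z w) 0 with h0 | h0
  · have hc1' : c = 1 := by
      have := Real.arccos_eq_zero.1 (hang ▸ h0)
      linarith [abs_le.1 hc1]
    have hzw : z - w = 0 := by
      have : ‖z - w‖ ^ 2 = 0 := by rw [hnq, hc1']; ring
      have h2 : ‖z - w‖ = 0 := by nlinarith [norm_nonneg (z - w)]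
      exact norm_eq_zero.1 h2
    have hsin0 : Real.sin (ang z w) = 0 := by rw [h0, Real.sin_zero]
    rw [hsin0, zero_smul, Gmat]
    have h1 : ‖z - w‖ = 0 := by rw [hzw, norm_zero]
    have h2 : nrmM (z - w) = 0 := by
      rw [hzw]; ext i j; simp [nrmM, Matrix.vecMulVec_apply]
    rw [h1, h2]; simp
  · rcases eq_or_ne (ang z w) π with hpi | hpi
    · have hc1' : c = -1 := by
        have := Real.arccos_eq_pi.1 (hang ▸ hpi)
        linarith [abs_le.1 hc1]
      have hzw : z + w = 0 := by
        have : ‖z + w‖ ^ 2 = 0 := by rw [hnp, hc1']; ring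
        have h2 : ‖z + w‖ = 0 := by nlinarith [norm_nonneg (z + w)]
        exact norm_eq_zero.1 h2
      have hsin0 : Real.sin (ang z w) = 0 := by rw [hpi, Real.sin_pi]
      rw [hsin0, zero_smul, Gmat]
      have h1 : ‖z + w‖ = 0 := by rw [hzw, norm_zero]
      have h2 : nrmM (z + w) = 0 := by
        rw [hzw]; ext i j; simp [nrmM, Matrix.vecMulVec_apply]
      rw [h1, h2]; simp
    · have hclt : c < 1 := by
        rcases lt_or_eq_of_le (abs_le.1 hc1).2 with h | h
        · exact h
        · exact absurd (by rw [hang, h, Real.arccos_one]) h0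
      have hcgt : -1 < c := by
        rcases lt_or_eq_of_le (abs_le.1 hc1).1 with h | h
        · exact h
        · exact absurd (by rw [hang, ← h, Real.arccos_neg_one]) hpi
      have hs2 : (0:ℝ) < 1 - c ^ 2 := by nlinarith
      set s : ℝ := Real.sqrt (1 - c ^ 2) with hs
      have hspos : 0 < s := Real.sqrt_pos.2 hs2
      have hssq : s ^ 2 = 1 - c ^ 2 := Real.sq_sqrt hs2.le
      set a : ℝ := Real.sqrt (2 + 2 * c) with ha
      set b : ℝ := Real.sqrt (2 - 2 * c) with hb
      have hapos : 0 < a := Real.sqrt_pos.2 (by linarith)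
      have hbpos : 0 < b := Real.sqrt_pos.2 (by linarith)
      have hasq : a ^ 2 = 2 + 2 * c := Real.sq_sqrt (by linarith)
      have hbsq : b ^ 2 = 2 - 2 * c := Real.sq_sqrt (by linarith)
      have hab : a * b = 2 * s := by
        rw [ha, hb, hs, ← Real.sqrt_mul (by linarith)]
        have h4 : (2 + 2 * c) * (2 - 2 * c) = 4 * (1 - c ^ 2) := by ring
        rw [h4, Real.sqrt_mul (by norm_num), show Real.sqrt 4 = 2 by
          rw [show (4:ℝ) = 2 ^ 2 by norm_num, Real.sqrt_sq (by norm_num)]]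
      rw [Mmat]
      simp only [if_neg h0, if_neg hpi]
      rw [Gmat, hcos, hsin]
      ext i j
      simp only [Matrix.smul_apply, Matrix.sub_apply, Matrix.add_apply, Matrix.vecMulVec_apply,
        smul_eq_mul, nrmM, hz, hw, div_one, hp, hq]
      have hadd : ((z + w : EuclideanSpace ℝ (Fin p)) : Fin p → ℝ) i = z i + w i := rfl
      have hsub : ((z - w : EuclideanSpace ℝ (Fin p)) : Fin p → ℝ) i = z i - w i := rfl
      have haddj : ((z + w : EuclideanSpace ℝ (Fin p)) : Fin p → ℝ) j = z j + w j := rfl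
      have hsubj : ((z - w : EuclideanSpace ℝ (Fin p)) : Fin p → ℝ) j = z j - w j := rfl
      rw [hadd, hsub, haddj, hsubj]
      have hss' : ∀ X : ℝ, s * ((s ^ 2)⁻¹ * X) = s⁻¹ * X := by
        intro X; field_simp
      have key : ∀ X P Q : ℝ, 4 * X = (2 - 2 * c) * P - (2 + 2 * c) * Q →
          s⁻¹ * X = b / 2 * (a⁻¹ * P) - a / 2 * (b⁻¹ * Q) := by
        intro X P Q h
        have h1 : b / 2 * (a⁻¹ * P) = b ^ 2 * P / (2 * (a * b)) := by
          field_simp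
        have h2 : a / 2 * (b⁻¹ * Q) = a ^ 2 * Q / (2 * (a * b)) := by
          field_simp
        rw [h1, h2, hab, hasq, hbsq]
        rw [div_sub_div_same, eq_div_iff (by positivity)]
        have hsi : s⁻¹ * s = 1 := inv_mul_cancel₀ hspos.ne'
        linear_combination h + 4 * X * hsi
      rw [hss']
      exact key _ _ _ (by ring)

/-- `Phi` for unit vectors in terms of the continuous surrogate. -/
lemma Phi_eq_Gmat (z w : EuclideanSpace ℝ (Fin p)) (hz : ‖z‖ = 1) (hw : ‖w‖ = 1) :
    Phi z w = ((π - 2 * ang z w) / π) • (1 : Matrix (Fin p) (Fin p) ℝ)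
      + (2 / π) • Gmat z w := by
  have hz0 : z ≠ 0 := by
    intro h; rw [h, norm_zero] at hz; norm_num at hz
  have hw0 : w ≠ 0 := by
    intro h; rw [h, norm_zero] at hw; norm_num at hw
  rw [Phi, if_pos ⟨hz0, hw0⟩, ← sin_smul_Mmat z w hz hw, smul_smul]
  congr 2
  ring

end Statement6Aux

/-- continuity of `Φ_{z,w}` in `(z, w)` on the unit sphere. -/
theorem statement_6 {n : ℕ} (ε : ℝ) (hε0 : 0 < ε) (hε1 : ε < 1)
    (z w zt wt : EuclideanSpace ℝ (Fin n))
    (hz : ‖z‖ = 1) (hw : ‖w‖ = 1) (hzt : ‖zt‖ = 1) (hwt : ‖wt‖ = 1)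
    (h1 : ‖zt - z‖ ≤ ε) (h2 : ‖wt - w‖ ≤ ε) :
    specNorm (Phi zt wt - Phi z w) ≤ 88 / π * ε := by
  have hπ := Real.pi_pos
  have hd1 : ‖(zt + wt) - (z + w)‖ ≤ 2 * ε := by
    have he : (zt + wt) - (z + w) = (zt - z) + (wt - w) := by abel
    rw [he]
    calc ‖(zt - z) + (wt - w)‖ ≤ ‖zt - z‖ + ‖wt - w‖ := norm_add_le _ _
      _ ≤ 2 * ε := by linarith
  have hd2 : ‖(zt - wt) - (z - w)‖ ≤ 2 * ε := by
    have he : (zt - wt) - (z - w) = (zt - z) - (wt - w) := by abel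
    rw [he]
    calc ‖(zt - z) - (wt - w)‖ ≤ ‖zt - z‖ + ‖wt - w‖ := norm_sub_le _ _
      _ ≤ 2 * ε := by linarith
  -- bound on the angle difference
  have hangzz : ang zt z ≤ π / 2 * ε := by
    calc ang zt z ≤ π / 2 * ‖zt - z‖ := ang_le_chord zt z hzt hz
      _ ≤ π / 2 * ε := by
          apply mul_le_mul_of_nonneg_left h1 (by positivity)
  have hangww : ang wt w ≤ π / 2 * ε := by
    calc ang wt w ≤ π / 2 * ‖wt - w‖ := ang_le_chord wt w hwt hw
      _ ≤ π / 2 * ε := by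
          apply mul_le_mul_of_nonneg_left h2 (by positivity)
  have htr1 : ang zt wt ≤ ang zt z + ang z w + ang w wt := by
    calc ang zt wt ≤ ang zt z + ang z wt := ang_triangle zt z wt hzt hz hwt
      _ ≤ ang zt z + (ang z w + ang w wt) := by
          have := ang_triangle z w wt hz hw hwt; linarith
      _ = ang zt z + ang z w + ang w wt := by ring
  have htr2 : ang z w ≤ ang z zt + ang zt wt + ang wt w := by
    calc ang z w ≤ ang z zt + ang zt w := ang_triangle z zt w hz hzt hw
      _ ≤ ang z zt + (ang zt wt + ang wt w) := by
          have := ang_triangle zt wt w hzt hwt hw; linarith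
      _ = ang z zt + ang zt wt + ang wt w := by ring
  have hangd : |ang z w - ang zt wt| ≤ π * ε := by
    rw [abs_le]
    have e1 : ang z zt = ang zt z := ang_comm z zt
    have e2 : ang w wt = ang wt w := ang_comm w wt
    constructor
    · linarith
    · linarith
  -- bound on the Gmat difference
  have hGd : specNorm (Gmat zt wt - Gmat z w) ≤ 16 * ε := by
    have hdecG : Gmat zt wt - Gmat z w
        = ((‖zt - wt‖ / 2) • nrmM (zt + wt) - (‖z - w‖ / 2) • nrmM (z + w))
          - ((‖zt + wt‖ / 2) • nrmM (zt - wt) - (‖z + w‖ / 2) • nrmM (z - w)) := by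
      rw [Gmat, Gmat]; abel
    rw [hdecG]
    have hn1 : ‖zt - wt‖ ≤ 2 := by
      calc ‖zt - wt‖ ≤ ‖zt‖ + ‖wt‖ := norm_sub_le _ _
        _ = 2 := by rw [hzt, hwt]; norm_num
    have hn2 : ‖zt + wt‖ ≤ 2 := by
      calc ‖zt + wt‖ ≤ ‖zt‖ + ‖wt‖ := norm_add_le _ _
        _ = 2 := by rw [hzt, hwt]; norm_num
    have hn3 : ‖z + w‖ ≤ 2 := by
      calc ‖z + w‖ ≤ ‖z‖ + ‖w‖ := norm_add_le _ _
        _ = 2 := by rw [hz, hw]; norm_num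
    have hn4 : ‖z - w‖ ≤ 2 := by
      calc ‖z - w‖ ≤ ‖z‖ + ‖w‖ := norm_sub_le _ _
        _ = 2 := by rw [hz, hw]; norm_num
    have hX : specNorm ((‖zt - wt‖ / 2) • nrmM (zt + wt) - (‖z - w‖ / 2) • nrmM (z + w))
        ≤ 8 * ε := by
      have h := smul_nrmM_pair (‖z - w‖ / 2) (‖zt - wt‖ / 2) (z + w) (zt + wt)
      have b1 : |‖zt - wt‖ / 2| ≤ 1 := by
        rw [abs_of_nonneg (by positivity)]; linarith
      have b2 : |‖zt - wt‖ / 2 - ‖z - w‖ / 2| ≤ ε := by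
        have : |‖zt - wt‖ - ‖z - w‖| ≤ ‖(zt - wt) - (z - w)‖ :=
          abs_norm_sub_norm_le _ _
        rw [show ‖zt - wt‖ / 2 - ‖z - w‖ / 2 = (‖zt - wt‖ - ‖z - w‖) / 2 by ring,
          abs_div, abs_of_nonneg (by norm_num : (0:ℝ) ≤ 2)]
        have h2' := le_trans this hd2
        linarith
      calc specNorm _ ≤ _ := h
        _ ≤ 1 * (3 * (2 * ε)) + ε * 2 := by
            apply add_le_add
            · apply mul_le_mul b1 _ (by positivity) (by norm_num)
              have := hd1
              linarith
            · apply mul_le_mul b2 hn3 (norm_nonneg _) (by linarith)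
        _ = 8 * ε := by ring
    have hY : specNorm ((‖zt + wt‖ / 2) • nrmM (zt - wt) - (‖z + w‖ / 2) • nrmM (z - w))
        ≤ 8 * ε := by
      have h := smul_nrmM_pair (‖z + w‖ / 2) (‖zt + wt‖ / 2) (z - w) (zt - wt)
      have b1 : |‖zt + wt‖ / 2| ≤ 1 := by
        rw [abs_of_nonneg (by positivity)]; linarith
      have b2 : |‖zt + wt‖ / 2 - ‖z + w‖ / 2| ≤ ε := by
        have : |‖zt + wt‖ - ‖z + w‖| ≤ ‖(zt + wt) - (z + w)‖ :=
          abs_norm_sub_norm_le _ _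
        rw [show ‖zt + wt‖ / 2 - ‖z + w‖ / 2 = (‖zt + wt‖ - ‖z + w‖) / 2 by ring,
          abs_div, abs_of_nonneg (by norm_num : (0:ℝ) ≤ 2)]
        have h2' := le_trans this hd1
        linarith
      calc specNorm _ ≤ _ := h
        _ ≤ 1 * (3 * (2 * ε)) + ε * 2 := by
            apply add_le_add
            · apply mul_le_mul b1 _ (by positivity) (by norm_num)
              have := hd2
              linarith
            · apply mul_le_mul b2 hn4 (norm_nonneg _) (by linarith)
        _ = 8 * ε := by ring
    calc specNorm _ ≤ _ + _ := specNorm_sub_le _ _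
      _ ≤ 8 * ε + 8 * ε := add_le_add hX hY
      _ = 16 * ε := by ring
  -- decomposition of the difference of `Phi`s
  have hdec : Phi zt wt - Phi z w
      = ((2 / π) * (ang z w - ang zt wt)) • (1 : Matrix (Fin n) (Fin n) ℝ)
        + (2 / π) • (Gmat zt wt - Gmat z w) := by
    rw [Phi_eq_Gmat zt wt hzt hwt, Phi_eq_Gmat z w hz hw]
    have hcoef : (π - 2 * ang zt wt) / π - (π - 2 * ang z w) / π
        = (2 / π) * (ang z w - ang zt wt) := by
      field_simp
      ring
    rw [show ((π - 2 * ang zt wt) / π) • (1 : Matrix (Fin n) (Fin n) ℝ) + (2 / π) • Gmat zt wt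
          - (((π - 2 * ang z w) / π) • (1 : Matrix (Fin n) (Fin n) ℝ) + (2 / π) • Gmat z w)
        = ((π - 2 * ang zt wt) / π - (π - 2 * ang z w) / π) • (1 : Matrix (Fin n) (Fin n) ℝ)
          + (2 / π) • (Gmat zt wt - Gmat z w) by module]
    rw [hcoef]
  rw [hdec]
  calc specNorm _ ≤ _ + _ := specNorm_add_le _ _
    _ ≤ (2 / π) * (π * ε) + (2 / π) * (16 * ε) := by
        apply add_le_add
        · rw [specNorm_smul]
          calc |2 / π * (ang z w - ang zt wt)| * specNorm (1 : Matrix (Fin n) (Fin n) ℝ)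
              ≤ |2 / π * (ang z w - ang zt wt)| * 1 :=
                mul_le_mul_of_nonneg_left specNorm_one_le (abs_nonneg _)
            _ = |2 / π| * |ang z w - ang zt wt| := by rw [mul_one, abs_mul]
            _ ≤ (2 / π) * (π * ε) := by
                rw [abs_of_nonneg (by positivity)]
                exact mul_le_mul_of_nonneg_left hangd (by positivity)
        · rw [specNorm_smul, abs_of_nonneg (by positivity : (0:ℝ) ≤ 2 / π)]
          exact mul_le_mul_of_nonneg_left hGd (by positivity)
    _ = (2 / π) * (π * ε + 16 * ε) := by ring
    _ ≤ (2 / π) * (44 * ε) := by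
        apply mul_le_mul_of_nonneg_left _ (by positivity)
        nlinarith [Real.pi_le_four]
    _ = 88 / π * ε := by
        field_simp
        ring


end DPR
end
end

section
/- Let V be a subspace of ℝ^n and let A ∈ ℝ^{m × n} have i.i.d. N(0, 1/m) entries. Then with probability 1, the set {diag(sgn(Av)) A : v ∈ V} of matrices has cardinality at most 10 m^{2 dim V}. -/
open scoped BigOperators ENNReal NNReal RealInnerProductSpace Matrix
open MeasureTheory ProbabilityTheory Real Filter

noncomputable section

namespace DPR

attribute [local instance] Classical.propDecidable

/-! ### Auxiliary material for statement 7 -/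

/-- Recursive bound on the number of sign vectors of `m` linear functionals on a
`k`-dimensional space. -/
def gg : ℕ → ℕ → ℕ
  | 0, _ => 1
  | _ + 1, 0 => 1
  | m + 1, k + 1 => gg m (k + 1) + 2 * gg m k

lemma gg_zero_right : ∀ m, gg m 0 = 1
  | 0 => rfl
  | _ + 1 => rfl

lemma gg_le_gg_succ (m k : ℕ) : gg m k ≤ gg (m + 1) k := by
  cases k with
  | zero => simp [gg_zero_right]
  | succ k => exact Nat.le_add_right _ _

lemma gg_le_pow3 : ∀ m k, gg m k ≤ 3 ^ m
  | 0, _ => le_refl 1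
  | m + 1, 0 => Nat.one_le_pow _ _ (by norm_num)
  | m + 1, k + 1 => by
      have h1 := gg_le_pow3 m (k + 1)
      have h2 := gg_le_pow3 m k
      have : (3 : ℕ) ^ (m + 1) = 3 ^ m * 3 := pow_succ 3 m
      show gg m (k + 1) + 2 * gg m k ≤ 3 ^ (m + 1)
      omega

lemma gg_le_linpow (m : ℕ) (hm : 1 ≤ m) : ∀ k, gg m k ≤ (k + 1) * (2 * m) ^ k := by
  induction m, hm using Nat.le_induction with
  | base =>
    intro k
    cases k with
    | zero => simp [gg_zero_right]
    | succ k =>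
      show gg 0 (k + 1) + 2 * gg 0 k ≤ (k + 1 + 1) * (2 * 1) ^ (k + 1)
      have h2 : 2 ≤ (2 * 1 : ℕ) ^ (k + 1) := by
        have := Nat.pow_le_pow_right (by norm_num : 1 ≤ 2) (Nat.one_le_iff_ne_zero.mpr (Nat.succ_ne_zero k))
        simpa using this
      have : 2 * 2 ≤ (k + 1 + 1) * (2 * 1) ^ (k + 1) :=
        Nat.mul_le_mul (by omega) h2
      simp only [gg]
      omega
  | succ m hm IH =>
    intro k
    cases k with
    | zero => simp [gg_zero_right]
    | succ k =>
      have h1 := IH (k + 1)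
      have h2 := IH k
      have key : (k + 2) * (2 * m) ^ (k + 1) + 2 * ((k + 1) * (2 * m) ^ k)
          ≤ (k + 2) * (2 * (m + 1)) ^ (k + 1) := by
        have hXY : (2 * m) ^ k ≤ (2 * (m + 1)) ^ k :=
          Nat.pow_le_pow_left (by omega) k
        calc (k + 2) * (2 * m) ^ (k + 1) + 2 * ((k + 1) * (2 * m) ^ k)
            = ((k + 2) * (2 * m) + 2 * (k + 1)) * (2 * m) ^ k := by ring
          _ ≤ ((k + 2) * (2 * (m + 1))) * (2 * (m + 1)) ^ k := by
              apply Nat.mul_le_mul _ hXY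
              nlinarith
          _ = (k + 2) * (2 * (m + 1)) ^ (k + 1) := by ring
      calc gg (m + 1) (k + 1) = gg m (k + 1) + 2 * gg m k := rfl
        _ ≤ (k + 2) * (2 * m) ^ (k + 1) + 2 * ((k + 1) * (2 * m) ^ k) :=
            add_le_add h1 (Nat.mul_le_mul_left 2 h2)
        _ ≤ (k + 2) * (2 * (m + 1)) ^ (k + 1) := key

lemma aux_pow_ineq : ∀ k : ℕ, (k + 2) * 2 ^ k ≤ 4 * 3 ^ k
  | 0 => by norm_num
  | k + 1 => by
      have ih := aux_pow_ineq k
      calc (k + 3) * 2 ^ (k + 1) = 2 * (k + 3) * 2 ^ k := by ring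
        _ ≤ 3 * ((k + 2) * 2 ^ k) := by
            have : 2 * (k + 3) ≤ 3 * (k + 2) := by omega
            calc 2 * (k + 3) * 2 ^ k ≤ 3 * (k + 2) * 2 ^ k :=
                  Nat.mul_le_mul_right _ this
              _ = 3 * ((k + 2) * 2 ^ k) := by ring
        _ ≤ 3 * (4 * 3 ^ k) := Nat.mul_le_mul_left _ ih
        _ = 4 * 3 ^ (k + 1) := by ring

lemma gg_le_final (m k : ℕ) (hm : 1 ≤ m) : gg m k ≤ 10 * m ^ (2 * k) := by
  have hmk : 1 ≤ m ^ (2 * k) := Nat.one_le_pow _ _ hm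
  rcases le_or_gt m 2 with h | h
  · have h3 : gg m k ≤ 3 ^ m := gg_le_pow3 m k
    have : (3 : ℕ) ^ m ≤ 9 := by
      interval_cases m <;> norm_num
    omega
  · -- m ≥ 3
    have h1 : gg m k ≤ (k + 1) * (2 * m) ^ k := gg_le_linpow m hm k
    have h2 : (k + 1) * (2 * m) ^ k ≤ 4 * 3 ^ k * m ^ k := by
      calc (k + 1) * (2 * m) ^ k = ((k + 1) * 2 ^ k) * m ^ k := by
            rw [mul_pow]; ring
        _ ≤ ((k + 2) * 2 ^ k) * m ^ k := by
            apply Nat.mul_le_mul_right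
            exact Nat.mul_le_mul_right _ (by omega)
        _ ≤ (4 * 3 ^ k) * m ^ k := Nat.mul_le_mul_right _ (aux_pow_ineq k)
    have h3 : 4 * 3 ^ k * m ^ k ≤ 10 * m ^ (2 * k) := by
      have h4 : (3 : ℕ) ^ k ≤ m ^ k := Nat.pow_le_pow_left (by omega) k
      calc 4 * 3 ^ k * m ^ k ≤ 4 * m ^ k * m ^ k := by
            apply Nat.mul_le_mul_right
            exact Nat.mul_le_mul_left _ h4
        _ = 4 * m ^ (2 * k) := by rw [two_mul, pow_add]; ring
        _ ≤ 10 * m ^ (2 * k) := Nat.mul_le_mul_right _ (by norm_num)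
    omega
lemma real_sign_pos {x : ℝ} (h : Real.sign x = 1) : 0 < x := by
  rcases lt_trichotomy x 0 with h' | h' | h'
  · rw [Real.sign_of_neg h'] at h; norm_num at h
  · rw [h', Real.sign_zero] at h; norm_num at h
  · exact h'

lemma real_sign_neg {x : ℝ} (h : Real.sign x = -1) : x < 0 := by
  rcases lt_trichotomy x 0 with h' | h' | h'
  · exact h'
  · rw [h', Real.sign_zero] at h; norm_num at h
  · rw [Real.sign_of_pos h'] at h; norm_num at h

/-- The set of sign vectors of the family of functionals `f` on the subspace `V`. -/
def sgnSet {n m : ℕ} (V : Submodule ℝ (EuclideanSpace ℝ (Fin n)))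
    (f : Fin m → (EuclideanSpace ℝ (Fin n) →ₗ[ℝ] ℝ)) : Set (Fin m → ℝ) :=
  {σ | ∃ v ∈ V, σ = fun i => Real.sign (f i v)}

lemma sgnSet_finite {n m : ℕ} (V : Submodule ℝ (EuclideanSpace ℝ (Fin n)))
    (f : Fin m → (EuclideanSpace ℝ (Fin n) →ₗ[ℝ] ℝ)) : (sgnSet V f).Finite := by
  apply Set.Finite.subset
    (Set.Finite.pi (fun i : Fin m => Set.toFinite ({-1, 0, 1} : Set ℝ)))
  rintro σ ⟨v, -, rfl⟩ i -
  rcases Real.sign_apply_eq (f i v) with h | h | h <;> simp [h]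

lemma snoc_eq {m : ℕ} {σ τ : Fin (m + 1) → ℝ}
    (h : σ ∘ Fin.castSucc = τ ∘ Fin.castSucc) (hl : σ (Fin.last m) = τ (Fin.last m)) :
    σ = τ :=
  funext fun i => Fin.lastCases hl (fun j => congrFun h j) i

lemma sgnSet_ncard {n : ℕ} : ∀ (m k : ℕ) (V : Submodule ℝ (EuclideanSpace ℝ (Fin n)))
    (f : Fin m → (EuclideanSpace ℝ (Fin n) →ₗ[ℝ] ℝ)),
    Module.finrank ℝ V ≤ k → (sgnSet V f).ncard ≤ gg m k := by
  intro m
  induction m with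
  | zero =>
    intro k V f _
    have hsub : sgnSet V f ⊆ {fun _ => 0} := fun σ _ => Subsingleton.elim σ _
    calc (sgnSet V f).ncard ≤ ({fun _ => 0} : Set (Fin 0 → ℝ)).ncard :=
          Set.ncard_le_ncard hsub (Set.finite_singleton _)
      _ = 1 := Set.ncard_singleton _
      _ = gg 0 k := rfl
  | succ m IH =>
    intro k V f hV
    set S := sgnSet V f with hS
    set r : (Fin (m + 1) → ℝ) → (Fin m → ℝ) := fun σ => σ ∘ Fin.castSucc with hr
    set T := sgnSet V (fun j : Fin m => f j.castSucc) with hT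
    have hSfin : S.Finite := sgnSet_finite V f
    have hTfin : T.Finite := sgnSet_finite V _
    by_cases hzero : ∀ v ∈ V, f (Fin.last m) v = 0
    · -- the last functional vanishes on V; drop it
      have hinj : Set.InjOn r S := by
        rintro σ ⟨v, hv, rfl⟩ τ ⟨w, hw, rfl⟩ hrs
        apply snoc_eq hrs
        simp only [hzero v hv, hzero w hw, Real.sign_zero]
      have himg : r '' S ⊆ T := by
        rintro _ ⟨σ, ⟨v, hv, rfl⟩, rfl⟩
        exact ⟨v, hv, rfl⟩
      calc S.ncard = (r '' S).ncard := (Set.ncard_image_of_injOn hinj).symm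
        _ ≤ T.ncard := Set.ncard_le_ncard himg hTfin
        _ ≤ gg m k := IH k V _ hV
        _ ≤ gg (m + 1) k := gg_le_gg_succ m k
    · push_neg at hzero
      obtain ⟨v₀, hv₀V, hv₀⟩ := hzero
      -- the dimension is positive
      cases k with
      | zero =>
        exfalso
        have : V = ⊥ := Submodule.finrank_eq_zero.mp (Nat.le_zero.mp hV)
        rw [this] at hv₀V
        have hv0 : v₀ = 0 := by simpa using hv₀V
        exact hv₀ (by rw [hv0, map_zero])
      | succ k =>
        set W := V ⊓ LinearMap.ker (f (Fin.last m)) with hW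
        have hWlt : W < V := by
          refine lt_of_le_of_ne inf_le_left (fun h => hv₀ ?_)
          have : v₀ ∈ W := h.symm ▸ hv₀V
          exact this.2
        have hWk : Module.finrank ℝ W ≤ k := by
          have := Submodule.finrank_lt_finrank_of_lt (K := ℝ) hWlt
          omega
        set T0 := sgnSet W (fun j : Fin m => f j.castSucc) with hT0
        have hT0fin : T0.Finite := sgnSet_finite W _
        set Sp := S ∩ {σ | σ (Fin.last m) = 1} with hSp
        set S0 := S ∩ {σ | σ (Fin.last m) = 0} with hS0
        set Sm := S ∩ {σ | σ (Fin.last m) = -1} with hSm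
        have hcover : S ⊆ (Sp ∪ Sm) ∪ S0 := by
          rintro σ hσ
          obtain ⟨v, hv, rfl⟩ := hσ
          rcases Real.sign_apply_eq (f (Fin.last m) v) with h | h | h
          · exact Or.inl (Or.inr ⟨⟨v, hv, rfl⟩, h⟩)
          · exact Or.inr ⟨⟨v, hv, rfl⟩, h⟩
          · exact Or.inl (Or.inl ⟨⟨v, hv, rfl⟩, h⟩)
        have hinjc : ∀ c : ℝ, Set.InjOn r (S ∩ {σ | σ (Fin.last m) = c}) := by
          rintro c σ ⟨-, hσc⟩ τ ⟨-, hτc⟩ hrs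
          exact snoc_eq hrs (by rw [Set.mem_setOf_eq.mp hσc, Set.mem_setOf_eq.mp hτc])
        -- images
        have himgP : r '' Sp ⊆ T := by
          rintro _ ⟨σ, ⟨⟨v, hv, rfl⟩, -⟩, rfl⟩; exact ⟨v, hv, rfl⟩
        have himgM : r '' Sm ⊆ T := by
          rintro _ ⟨σ, ⟨⟨v, hv, rfl⟩, -⟩, rfl⟩; exact ⟨v, hv, rfl⟩
        have himg0 : r '' S0 ⊆ T0 := by
          rintro _ ⟨σ, ⟨⟨v, hv, rfl⟩, h0⟩, rfl⟩
          have hv0 : f (Fin.last m) v = 0 :=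
            Real.sign_eq_zero_iff.mp (Set.mem_setOf_eq.mp h0)
          exact ⟨v, ⟨hv, LinearMap.mem_ker.mpr hv0⟩, rfl⟩
        -- the convexity argument
        have hkey : r '' Sp ∩ r '' Sm ⊆ T0 := by
          rintro τ ⟨⟨σp, hσpSp, hτp⟩, ⟨σm, hσmSm, hτm⟩⟩
          obtain ⟨⟨u, hu, hσpu⟩, hup⟩ := hσpSp
          obtain ⟨⟨w, hw, hσmw⟩, hwm⟩ := hσmSm
          have ha : 0 < f (Fin.last m) u := by
            apply real_sign_pos
            have h' := Set.mem_setOf_eq.mp hup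
            rw [hσpu] at h'
            exact h'
          have hb : f (Fin.last m) w < 0 := by
            apply real_sign_neg
            have h' := Set.mem_setOf_eq.mp hwm
            rw [hσmw] at h'
            exact h'
          set a := f (Fin.last m) u
          set b := f (Fin.last m) w
          have hab : 0 < a - b := by linarith
          set t : ℝ := a / (a - b) with htdef
          have ht0 : 0 < t := div_pos ha hab
          have ht1 : t < 1 := (div_lt_one hab).mpr (by linarith)
          set z := (1 - t) • u + t • w with hz
          have hzV : z ∈ V := V.add_mem (V.smul_mem _ hu) (V.smul_mem _ hw)
          have hzker : f (Fin.last m) z = 0 := by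
            have hne : a - b ≠ 0 := ne_of_gt hab
            simp only [hz, map_add, LinearMap.map_smul, smul_eq_mul, htdef]
            field_simp
            ring
          refine ⟨z, ⟨hzV, LinearMap.mem_ker.mpr hzker⟩, ?_⟩
          funext j
          have hτj : τ j = Real.sign (f j.castSucc u) := by
            rw [← hτp, hσpu]; rfl
          have hτj' : τ j = Real.sign (f j.castSucc w) := by
            rw [← hτm, hσmw]; rfl
          have hfz : f j.castSucc z = (1 - t) * f j.castSucc u + t * f j.castSucc w := by
            simp only [hz, map_add, LinearMap.map_smul, smul_eq_mul]
          rcases lt_trichotomy (f j.castSucc u) 0 with hp | hp | hp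
          · have hq : f j.castSucc w < 0 := by
              apply real_sign_neg; rw [← hτj', hτj, Real.sign_of_neg hp]
            have : f j.castSucc z < 0 := by
              rw [hfz]
              have h1 : (1 - t) * f j.castSucc u ≤ 0 :=
                mul_nonpos_of_nonneg_of_nonpos (by linarith) hp.le
              have h2 : t * f j.castSucc w < 0 := mul_neg_of_pos_of_neg ht0 hq
              linarith
            rw [hτj, Real.sign_of_neg hp, Real.sign_of_neg this]
          · have hq : f j.castSucc w = 0 := by
              apply Real.sign_eq_zero_iff.mp
              rw [← hτj', hτj, hp, Real.sign_zero]
            have : f j.castSucc z = 0 := by rw [hfz, hp, hq]; ring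
            rw [hτj, hp, this]
          · have hq : 0 < f j.castSucc w := by
              apply real_sign_pos; rw [← hτj', hτj, Real.sign_of_pos hp]
            have : 0 < f j.castSucc z := by
              rw [hfz]
              have h1 : 0 < (1 - t) * f j.castSucc u := mul_pos (by linarith) hp
              have h2 : 0 < t * f j.castSucc w := mul_pos ht0 hq
              linarith
            rw [hτj, Real.sign_of_pos hp, Real.sign_of_pos this]
        -- finiteness of the pieces
        have hSpfin : Sp.Finite := hSfin.subset Set.inter_subset_left
        have hSmfin : Sm.Finite := hSfin.subset Set.inter_subset_left
        have hS0fin : S0.Finite := hSfin.subset Set.inter_subset_left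
        -- counting
        have hcount : S.ncard ≤ Sp.ncard + Sm.ncard + S0.ncard := by
          calc S.ncard ≤ ((Sp ∪ Sm) ∪ S0).ncard :=
                Set.ncard_le_ncard hcover (((hSpfin.union hSmfin).union hS0fin))
            _ ≤ (Sp ∪ Sm).ncard + S0.ncard := Set.ncard_union_le _ _
            _ ≤ Sp.ncard + Sm.ncard + S0.ncard := by
                have := Set.ncard_union_le Sp Sm; omega
        have hPM : Sp.ncard + Sm.ncard ≤ T.ncard + T0.ncard := by
          have h1 : Sp.ncard = (r '' Sp).ncard := (Set.ncard_image_of_injOn (hinjc 1)).symm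
          have h2 : Sm.ncard = (r '' Sm).ncard := (Set.ncard_image_of_injOn (hinjc (-1))).symm
          have h3 : (r '' Sp ∪ r '' Sm).ncard + (r '' Sp ∩ r '' Sm).ncard
              = (r '' Sp).ncard + (r '' Sm).ncard :=
            Set.ncard_union_add_ncard_inter _ _ (hSpfin.image r) (hSmfin.image r)
          have h4 : (r '' Sp ∪ r '' Sm).ncard ≤ T.ncard :=
            Set.ncard_le_ncard (Set.union_subset himgP himgM) hTfin
          have h5 : (r '' Sp ∩ r '' Sm).ncard ≤ T0.ncard :=
            Set.ncard_le_ncard hkey hT0fin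
          omega
        have h0 : S0.ncard ≤ T0.ncard := by
          rw [← Set.ncard_image_of_injOn (hinjc 0)]
          exact Set.ncard_le_ncard himg0 hT0fin
        have hTb : T.ncard ≤ gg m (k + 1) := IH (k + 1) V _ hV
        have hT0b : T0.ncard ≤ gg m k := IH k W _ hWk
        calc S.ncard ≤ Sp.ncard + Sm.ncard + S0.ncard := hcount
          _ ≤ (T.ncard + T0.ncard) + T0.ncard := by omega
          _ ≤ gg m (k + 1) + 2 * gg m k := by omega
          _ = gg (m + 1) (k + 1) := rfl
/-- with probability `1` over a Gaussian `A`, the set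
`{diag(sgn(Av)) A : v ∈ V}` has at most `10 m^(2 dim V)` elements. -/
theorem statement_7 {m n : ℕ} (hm : 0 < m) (V : Submodule ℝ (EuclideanSpace ℝ (Fin n))) :
    gaussMatrix m n ((m : ℝ≥0))⁻¹
      {A | {B : Matrix (Fin m) (Fin n) ℝ | ∃ v ∈ V, B = Asign (Matrix.of A) v}.Finite ∧
        {B : Matrix (Fin m) (Fin n) ℝ | ∃ v ∈ V, B = Asign (Matrix.of A) v}.ncard
          ≤ 10 * m ^ (2 * Module.finrank ℝ V)} = 1 := by
  have key : ∀ A : Fin m → Fin n → ℝ,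
      {B : Matrix (Fin m) (Fin n) ℝ | ∃ v ∈ V, B = Asign (Matrix.of A) v}.Finite ∧
      {B : Matrix (Fin m) (Fin n) ℝ | ∃ v ∈ V, B = Asign (Matrix.of A) v}.ncard
        ≤ 10 * m ^ (2 * Module.finrank ℝ V) := by
    intro A
    set f : Fin m → (EuclideanSpace ℝ (Fin n) →ₗ[ℝ] ℝ) := fun i =>
      (LinearMap.proj i) ∘ₗ (Matrix.mulVecLin (Matrix.of A)) ∘ₗ
        (WithLp.linearEquiv 2 ℝ (Fin n → ℝ)).toLinearMap with hf
    have hfapp : ∀ (i : Fin m) (v : EuclideanSpace ℝ (Fin n)),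
        f i v = (Matrix.of A).mulVec v i := fun i v => rfl
    have himg : {B : Matrix (Fin m) (Fin n) ℝ | ∃ v ∈ V, B = Asign (Matrix.of A) v}
        = (fun σ : Fin m → ℝ => Matrix.diagonal σ * Matrix.of A) '' sgnSet V f := by
      ext B
      constructor
      · rintro ⟨v, hv, rfl⟩
        exact ⟨fun i => Real.sign (f i v), ⟨v, hv, rfl⟩, by
          simp only [Asign]
          congr 1⟩
      · rintro ⟨σ, ⟨v, hv, rfl⟩, rfl⟩
        exact ⟨v, hv, by simp only [Asign]; congr 1⟩
    have hfin := sgnSet_finite V f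
    constructor
    · rw [himg]; exact hfin.image _
    · rw [himg]
      calc ((fun σ : Fin m → ℝ => Matrix.diagonal σ * Matrix.of A) '' sgnSet V f).ncard
          ≤ (sgnSet V f).ncard := Set.ncard_image_le hfin
        _ ≤ gg m (Module.finrank ℝ V) := sgnSet_ncard m _ V f le_rfl
        _ ≤ 10 * m ^ (2 * Module.finrank ℝ V) := gg_le_final m _ hm
  have huniv : {A : Fin m → Fin n → ℝ |
      {B : Matrix (Fin m) (Fin n) ℝ | ∃ v ∈ V, B = Asign (Matrix.of A) v}.Finite ∧
      {B : Matrix (Fin m) (Fin n) ℝ | ∃ v ∈ V, B = Asign (Matrix.of A) v}.ncard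
        ≤ 10 * m ^ (2 * Module.finrank ℝ V)} = Set.univ :=
    Set.eq_univ_of_forall key
  rw [huniv]
  have : IsProbabilityMeasure (gaussMatrix m n ((m : ℝ≥0))⁻¹) := by
    unfold gaussMatrix; infer_instance
  exact measure_univ

end DPR
end
end

section
/- The quantities ρ_d satisfy: there exists κ > 0 such that ρ_d ≥ κ for all integers d ≥ 2 (i.e. min_{d ≥ 2} ρ_d > 0), and there exists a positive numerical constant C such that 1/(C(d+2)²) ≤ 1 − ρ_d for all integers d ≥ 2. -/
open scoped BigOperators ENNReal NNReal RealInnerProductSpace Matrix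
open MeasureTheory ProbabilityTheory Real Filter

noncomputable section

namespace DPR

attribute [local instance] Classical.propDecidable

lemma aval_mem {θ : ℝ} (h0 : 0 ≤ θ) (h1 : θ ≤ π) :
    -1 ≤ ((π - θ) * Real.cos θ + Real.sin θ) / π ∧
      ((π - θ) * Real.cos θ + Real.sin θ) / π ≤ 1 := by
  have hπ := Real.pi_pos
  have hs0 : 0 ≤ Real.sin θ := Real.sin_nonneg_of_nonneg_of_le_pi h0 h1
  have hs1 : Real.sin θ ≤ θ := Real.sin_le h0
  have hc0 := Real.neg_one_le_cos θ
  have hc1 := Real.cos_le_one θ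
  constructor
  · rw [le_div_iff₀ hπ]; nlinarith
  · rw [div_le_one hπ]; nlinarith

lemma cos_gfun {θ : ℝ} (h0 : 0 ≤ θ) (h1 : θ ≤ π) :
    Real.cos (gfun θ) = ((π - θ) * Real.cos θ + Real.sin θ) / π :=
  Real.cos_arccos (aval_mem h0 h1).1 (aval_mem h0 h1).2

lemma thetaCheck_one : thetaCheck 1 = π / 2 := by
  show gfun π = π / 2
  unfold gfun
  rw [Real.sin_pi, Real.cos_pi, sub_self]
  norm_num [Real.arccos_zero]

lemma gfun_mem {θ : ℝ} (h0 : 0 < θ) (h1 : θ ≤ π / 2) : 0 < gfun θ ∧ gfun θ ≤ π / 2 := by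
  have hπ := Real.pi_pos
  have h1' : θ ≤ π := h1.trans (by linarith)
  have hc0 : 0 ≤ Real.cos θ := Real.cos_nonneg_of_mem_Icc ⟨by linarith, h1⟩
  have hs0 : 0 ≤ Real.sin θ := Real.sin_nonneg_of_nonneg_of_le_pi h0.le h1'
  constructor
  · rw [gfun, Real.arccos_pos, div_lt_one hπ]
    have hs1 : Real.sin θ < θ := Real.sin_lt h0
    nlinarith [Real.cos_le_one θ]
  · rw [gfun, Real.arccos_le_pi_div_two]
    have : 0 ≤ (π - θ) * Real.cos θ + Real.sin θ := by nlinarith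
    positivity

lemma thetaCheck_mem : ∀ d : ℕ, 1 ≤ d → 0 < thetaCheck d ∧ thetaCheck d ≤ π / 2 := by
  intro d hd
  induction d, hd using Nat.le_induction with
  | base => rw [thetaCheck_one]; exact ⟨by positivity, le_refl _⟩
  | succ d hd ih => exact gfun_mem ih.1 ih.2

lemma thetaCheck_mem' (d : ℕ) : 0 ≤ thetaCheck d ∧ thetaCheck d ≤ π := by
  rcases Nat.eq_zero_or_pos d with h | h
  · subst h; exact ⟨Real.pi_pos.le, le_refl _⟩
  · obtain ⟨a, b⟩ := thetaCheck_mem d h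
    exact ⟨a.le, b.trans (by linarith [Real.pi_pos])⟩




lemma sin_sub_mul_cos_le {θ : ℝ} (h : 0 ≤ θ) : Real.sin θ - θ * Real.cos θ ≤ θ ^ 3 / 3 := by
  have hd : ∀ x : ℝ, HasDerivAt (fun t : ℝ => t ^ 3 / 3 - Real.sin t + t * Real.cos t)
      (x ^ 2 - x * Real.sin x) x := by
    intro x
    have h1 : HasDerivAt (fun t : ℝ => t ^ 3 / 3) (x ^ 2) x := by
      simpa using (hasDerivAt_pow 3 x).div_const 3
    have h2 := Real.hasDerivAt_sin x
    have h3 := (hasDerivAt_id x).mul (Real.hasDerivAt_cos x)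
    exact ((h1.sub h2).add h3).congr_deriv (by simp only [id]; ring)
  have mono : MonotoneOn (fun t : ℝ => t ^ 3 / 3 - Real.sin t + t * Real.cos t) (Set.Ici 0) := by
    apply monotoneOn_of_deriv_nonneg (convex_Ici 0)
    · exact Continuous.continuousOn (by continuity)
    · intro x _
      exact (hd x).differentiableAt.differentiableWithinAt
    · intro x hx
      rw [interior_Ici] at hx
      rw [(hd x).deriv]
      nlinarith [mul_nonneg (le_of_lt hx) (sub_nonneg.mpr (Real.sin_le (le_of_lt hx)))]
  have h0 := mono (Set.self_mem_Ici) (Set.mem_Ici.mpr h) h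
  simp at h0
  linarith

lemma gfun_ge {θ : ℝ} (h0 : 0 < θ) (h1 : θ ≤ π / 2) : θ - π / 6 * θ ^ 2 ≤ gfun θ := by
  have hπ := Real.pi_pos
  obtain ⟨hg0, hg1⟩ := gfun_mem h0 h1
  rcases le_or_gt θ (gfun θ) with h | h
  · nlinarith
  · set θ' := gfun θ with hθ'
    have h1' : θ ≤ π := by linarith
    have key : Real.cos θ' - Real.cos θ = (Real.sin θ - θ * Real.cos θ) / π := by
      rw [cos_gfun h0.le h1']; field_simp; ring
    have hprod : Real.cos θ' - Real.cos θ
        = 2 * Real.sin ((θ + θ') / 2) * Real.sin ((θ - θ') / 2) := by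
      rw [Real.cos_sub_cos]
      have e1 : (θ' + θ) / 2 = (θ + θ') / 2 := by ring
      have e2 : (θ' - θ) / 2 = -((θ - θ') / 2) := by ring
      rw [e1, e2, Real.sin_neg]; ring
    have hA : 2 / π * ((θ + θ') / 2) ≤ Real.sin ((θ + θ') / 2) :=
      Real.mul_le_sin (by linarith) (by linarith)
    have hB : 2 / π * ((θ - θ') / 2) ≤ Real.sin ((θ - θ') / 2) :=
      Real.mul_le_sin (by linarith) (by linarith)
    have hA' : θ / π ≤ Real.sin ((θ + θ') / 2) := by
      refine le_trans ?_ hA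
      have e : 2 / π * ((θ + θ') / 2) = (θ + θ') / π := by ring
      rw [e]
      gcongr
      linarith
    have hB' : (θ - θ') / π ≤ Real.sin ((θ - θ') / 2) := by
      refine le_trans ?_ hB
      have e : 2 / π * ((θ - θ') / 2) = (θ - θ') / π := by ring
      rw [e]
    have hBnn : 0 ≤ (θ - θ') / π := div_nonneg (by linarith) hπ.le
    have hP : θ / π * ((θ - θ') / π) ≤
        Real.sin ((θ + θ') / 2) * Real.sin ((θ - θ') / 2) :=
      mul_le_mul hA' hB' hBnn (le_trans (by positivity) hA')
    have hcube := sin_sub_mul_cos_le h0.le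
    -- 2 * (θ/π) * ((θ-θ')/π) ≤ (sin θ - θ cos θ)/π ≤ θ^3/(3π)
    have hchain : 2 * (θ / π * ((θ - θ') / π)) ≤ θ ^ 3 / 3 / π := by
      calc 2 * (θ / π * ((θ - θ') / π)) ≤ 2 * (Real.sin ((θ + θ') / 2) * Real.sin ((θ - θ') / 2)) := by
            linarith
        _ = (Real.sin θ - θ * Real.cos θ) / π := by rw [← key, hprod]; ring
        _ ≤ θ ^ 3 / 3 / π := by gcongr
    have e1 : 2 * (θ / π * ((θ - θ') / π)) = 2 * θ * (θ - θ') / π ^ 2 := by ring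
    have e2 : θ ^ 3 / 3 / π = θ ^ 3 / (3 * π) := by ring
    rw [e1, e2, div_le_div_iff₀ (by positivity) (by positivity)] at hchain
    nlinarith [hchain, mul_pos h0 hπ, mul_pos (mul_pos h0 h0) hπ]

lemma sum_identity : ∀ d : ℕ, 1 ≤ d →
    ∑ i ∈ Finset.range d, (Real.sin (thetaCheck i) / π) *
      ∏ j ∈ Finset.Ico (i + 1) d, (π - thetaCheck j) / π = Real.cos (thetaCheck d) := by
  intro d hd
  induction d, hd using Nat.le_induction with
  | base =>
    rw [Finset.sum_range_one, thetaCheck_one]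
    show Real.sin (thetaCheck 0) / π * ∏ j ∈ Finset.Ico 1 1, (π - thetaCheck j) / π = _
    rw [Finset.Ico_self, Finset.prod_empty, Real.cos_pi_div_two]
    show Real.sin π / π * 1 = 0
    rw [Real.sin_pi]; ring
  | succ d hd ih =>
    rw [Finset.sum_range_succ]
    have h1 : ∀ i ∈ Finset.range d,
        (Real.sin (thetaCheck i) / π) * ∏ j ∈ Finset.Ico (i + 1) (d + 1), (π - thetaCheck j) / π
        = ((Real.sin (thetaCheck i) / π) * ∏ j ∈ Finset.Ico (i + 1) d, (π - thetaCheck j) / π)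
            * ((π - thetaCheck d) / π) := by
      intro i hi
      rw [Finset.prod_Ico_succ_top (Finset.mem_range.mp hi)]
      ring
    rw [Finset.sum_congr rfl h1, ← Finset.sum_mul, ih, Finset.Ico_self, Finset.prod_empty]
    obtain ⟨ht0, ht1⟩ := thetaCheck_mem' d
    have : thetaCheck (d + 1) = gfun (thetaCheck d) := rfl
    rw [this, cos_gfun ht0 ht1]
    have hπ : (π : ℝ) ≠ 0 := ne_of_gt Real.pi_pos
    field_simp

lemma rho_eq (d : ℕ) (hd : 1 ≤ d) :
    rho d = 2 * Real.sin (thetaCheck d) / π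
      + ((π - 2 * thetaCheck d) / π) * Real.cos (thetaCheck d) := by
  rw [rho, sum_identity d hd]

lemma thetaCheck_two : thetaCheck 2 = Real.arccos (1 / π) := by
  show gfun (thetaCheck 1) = _
  rw [thetaCheck_one, gfun, Real.cos_pi_div_two, Real.sin_pi_div_two, mul_zero, zero_add]

lemma thetaCheck_two_ge : 1 ≤ thetaCheck 2 := by
  rw [thetaCheck_two]
  have h3 : (3:ℝ) < π := Real.pi_gt_three
  have h1 : Real.arccos (1/2) = π / 3 := by
    rw [← Real.cos_pi_div_three]
    exact Real.arccos_cos (by positivity) (by linarith)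
  have hπ0 : (0:ℝ) < π := Real.pi_pos
  have hmem1 : (1/π : ℝ) ∈ Set.Icc (-1:ℝ) 1 := by
    constructor
    · exact le_trans (by norm_num : (-1:ℝ) ≤ 0) (by positivity)
    · rw [div_le_one hπ0]; linarith
  have hmem2 : (1/2 : ℝ) ∈ Set.Icc (-1:ℝ) 1 := by norm_num
  have hlt : (1/π : ℝ) < 1/2 := by
    rw [div_lt_div_iff₀ hπ0 (by norm_num)]; linarith
  have := Real.strictAntiOn_arccos hmem1 hmem2 hlt
  linarith [this, h1]

lemma step' {θ m : ℝ} (h0 : 0 < θ) (h1 : θ ≤ π / 2) (hm1 : 1 ≤ m) (hm : 1 ≤ m * θ) :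
    1 ≤ (m + 4) * gfun θ := by
  have hπu : π < 3.15 := Real.pi_lt_d2
  have hπl : (3:ℝ) < π := Real.pi_gt_three
  have hg := gfun_ge h0 h1
  have hbt : 0 < 1 - π / 6 * θ := by nlinarith
  have key : 1 ≤ (m + 4) * (θ - π / 6 * θ ^ 2) := by
    nlinarith [mul_nonneg (sub_nonneg.mpr hm) hbt.le, mul_pos h0 hbt]
  nlinarith [key, hg]

lemma theta_lb : ∀ d : ℕ, 2 ≤ d → 1 ≤ (4 * (d : ℝ) - 7) * thetaCheck d := by
  intro d hd
  induction d, hd using Nat.le_induction with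
  | base =>
    norm_num
    linarith [thetaCheck_two_ge]
  | succ d hd ih =>
    have hd' : (2:ℝ) ≤ (d:ℝ) := by exact_mod_cast hd
    obtain ⟨h0, h1⟩ := thetaCheck_mem d (by omega)
    have := step' h0 h1 (by linarith) ih
    have e : (4 * ((d:ℝ) + 1) - 7) = (4 * (d:ℝ) - 7) + 4 := by ring
    push_cast
    rw [e]
    exact this

lemma psi_bound {θ : ℝ} (h0 : 0 ≤ θ) (h1 : θ ≤ π / 2) :
    θ ^ 2 / 100 ≤ (1 - Real.cos θ) - 2 / π * (Real.sin θ - θ * Real.cos θ) := by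
  have hπu : π < 3.15 := Real.pi_lt_d2
  have hπl : (3:ℝ) < π := Real.pi_gt_three
  rcases h0.eq_or_lt with h | h
  · simp [← h]
  · have hx0 : 0 < θ / 2 := by linarith
    have hx1 : θ / 2 ≤ 1 := by linarith
    have hq := (Real.sin_gt_sub_cube hx0).le
    have hx2 : (θ / 2) ^ 2 ≤ 0.64 := by nlinarith
    have hs84 : 0.84 * (θ / 2) ≤ Real.sin (θ / 2) := by
      nlinarith [mul_nonneg hx0.le (by nlinarith : (0:ℝ) ≤ 0.64 - (θ/2)^2)]
    have hsin2 : 0.7056 * (θ / 2) ^ 2 ≤ Real.sin (θ / 2) ^ 2 := by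
      nlinarith [hs84, mul_pos hx0 hx0]
    have hcosid : 1 - Real.cos θ = 2 * Real.sin (θ / 2) ^ 2 := by
      have h2 := Real.cos_two_mul (θ / 2)
      have h3 := Real.sin_sq_add_cos_sq (θ / 2)
      have e : 2 * (θ / 2) = θ := by ring
      rw [e] at h2
      linarith
    have hcube := sin_sub_mul_cos_le h0
    have hterm : 2 / π * (Real.sin θ - θ * Real.cos θ) ≤ θ ^ 2 / 3 := by
      rw [div_mul_eq_mul_div, div_le_iff₀ (by linarith : (0:ℝ) < π)]
      nlinarith [hcube, mul_nonneg (sq_nonneg θ) (by linarith : (0:ℝ) ≤ π - 2 * θ)]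
    have e4 : (θ / 2) ^ 2 = θ ^ 2 / 4 := by ring
    rw [e4] at hsin2
    nlinarith [sq_nonneg θ, mul_pos h h]


/-- `ρ_d` is bounded below away from `0` and bounded away from `1`
by `1/(C(d+2)²)`, uniformly over `d ≥ 2`. -/
theorem statement_10 :
    (∃ κ > (0 : ℝ), ∀ d : ℕ, 2 ≤ d → κ ≤ rho d) ∧
    ∃ C > (0 : ℝ), ∀ d : ℕ, 2 ≤ d → 1 / (C * ((d : ℝ) + 2) ^ 2) ≤ 1 - rho d := by
  have hπu : π < 3.15 := Real.pi_lt_d2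
  have hπl : (3:ℝ) < π := Real.pi_gt_three
  have hπ0 : (0:ℝ) < π := by linarith
  have hsqrt2 : (1.4:ℝ) ≤ √2 := by
    nlinarith [Real.sq_sqrt (by norm_num : (0:ℝ) ≤ 2), Real.sqrt_nonneg 2]
  constructor
  · refine ⟨1/4, by norm_num, fun d hd => ?_⟩
    have hd1 : 1 ≤ d := by omega
    obtain ⟨h0, h1⟩ := thetaCheck_mem d hd1
    set θ := thetaCheck d with hθ
    rw [rho_eq d hd1]
    have hs0 : 0 ≤ Real.sin θ := Real.sin_nonneg_of_nonneg_of_le_pi h0.le (by linarith)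
    have hc0 : 0 ≤ Real.cos θ := Real.cos_nonneg_of_mem_Icc ⟨by linarith, h1⟩
    rcases le_or_gt θ (π/4) with hcase | hcase
    · have hc : Real.cos (π/4) ≤ Real.cos θ :=
        Real.cos_le_cos_of_nonneg_of_le_pi h0.le (by linarith) hcase
      rw [Real.cos_pi_div_four] at hc
      have hfrac : (1:ℝ)/2 ≤ (π - 2*θ)/π := by
        rw [le_div_iff₀ hπ0]; linarith
      have ht2 : (1:ℝ)/2 * (0.7) ≤ ((π - 2*θ)/π) * Real.cos θ := by
        apply mul_le_mul hfrac (by linarith) (by norm_num) (by positivity)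
      have ht1 : (0:ℝ) ≤ 2 * Real.sin θ / π := by positivity
      linarith
    · have hc : Real.cos (π/4) ≤ Real.cos (π/2 - θ) :=
        Real.cos_le_cos_of_nonneg_of_le_pi (by linarith) (by linarith) (by linarith)
      rw [Real.cos_pi_div_four, Real.cos_pi_div_two_sub] at hc
      have ht2 : (0:ℝ) ≤ ((π - 2*θ)/π) * Real.cos θ := by
        apply mul_nonneg (div_nonneg (by linarith) hπ0.le) hc0
      have ht1 : (1:ℝ)/4 ≤ 2 * Real.sin θ / π := by
        rw [le_div_iff₀ hπ0]; nlinarith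
      linarith
  · refine ⟨1600, by norm_num, fun d hd => ?_⟩
    have hd1 : 1 ≤ d := by omega
    have hdR : (2:ℝ) ≤ (d:ℝ) := by exact_mod_cast hd
    obtain ⟨h0, h1⟩ := thetaCheck_mem d hd1
    set θ := thetaCheck d with hθ
    have hlb := theta_lb d hd
    rw [rho_eq d hd1]
    have e : 1 - (2 * Real.sin θ / π + ((π - 2*θ)/π) * Real.cos θ)
        = (1 - Real.cos θ) - 2 / π * (Real.sin θ - θ * Real.cos θ) := by
      field_simp; ring
    rw [e]
    have hψ := psi_bound h0.le h1
    have hθ4 : 1 ≤ 4 * ((d:ℝ) + 2) * θ := by nlinarith [mul_nonneg (by linarith : (0:ℝ) ≤ 15) h0.le]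
    have hfin : 1 / (1600 * ((d:ℝ) + 2) ^ 2) ≤ θ ^ 2 / 100 := by
      have hd2 : (0:ℝ) < (d:ℝ) + 2 := by linarith
      rw [div_le_div_iff₀ (by positivity) (by norm_num)]
      nlinarith [mul_le_mul hθ4 hθ4 (by norm_num) (by positivity : (0:ℝ) ≤ 4 * ((d:ℝ)+2) * θ)]
    linarith



end DPR
end
end

section
/- For all nonzero x, y ∈ ℝ^k, ‖h_x − h_y‖ ≤ (((2d² + (10π + 8)d + 20π)‖x_*‖)/(π² 2^d) · max(1/‖x‖, 1/‖y‖) + 1/2^d) ‖x − y‖. In particular, if x, y ∉ B(0, r‖x_*‖) for some r > 0, then ‖h_x − h_y‖ ≤ ((2d² + (10π + 8)d + 20π)/(r π² 2^d) + 1/2^d) ‖x − y‖. -/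
open scoped BigOperators ENNReal NNReal RealInnerProductSpace Matrix
open MeasureTheory ProbabilityTheory Real Filter

noncomputable section

namespace DPR

attribute [local instance] Classical.propDecidable

/-! ### Auxiliary lemmas for Statement 11 -/

section Statement11Aux

/-- The argument of the arccos in `gfun`. -/
def ufun (θ : ℝ) : ℝ := ((π - θ) * Real.cos θ + Real.sin θ) / π

/-- The derivative of `gfun` on `(0, π)`. -/
def gdfun (θ : ℝ) : ℝ := (π - θ) * Real.sin θ / π * (1 / Real.sqrt (1 - ufun θ ^ 2))

lemma key_ineq' {θ : ℝ} (h0 : 0 ≤ θ) (h1 : θ ≤ π) :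
    ((π - θ) * Real.sin θ) ^ 2 ≤ π ^ 2 - ((π - θ) * Real.cos θ + Real.sin θ) ^ 2 := by
  have hs0 : 0 ≤ Real.sin θ := Real.sin_nonneg_of_nonneg_of_le_pi h0 h1
  have hs1 : Real.sin θ ≤ θ := by
    have := Real.abs_sin_le_abs (x := θ)
    rw [abs_of_nonneg h0] at this
    exact (le_abs_self _).trans this
  have hc1 : Real.cos θ ≤ 1 := Real.cos_le_one θ
  have hc2 : -1 ≤ Real.cos θ := Real.neg_one_le_cos θ
  have hpyth : Real.sin θ ^ 2 + Real.cos θ ^ 2 = 1 := Real.sin_sq_add_cos_sq θ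
  have key : Real.sin θ * (Real.sin θ + 2 * (π - θ) * Real.cos θ) ≤ θ * (2 * π - θ) := by
    rcases le_or_gt (Real.sin θ + 2 * (π - θ) * Real.cos θ) 0 with h | h
    · have : Real.sin θ * (Real.sin θ + 2 * (π - θ) * Real.cos θ) ≤ 0 :=
        mul_nonpos_of_nonneg_of_nonpos hs0 h
      nlinarith [Real.pi_pos]
    · have h2 : Real.sin θ + 2 * (π - θ) * Real.cos θ ≤ 2 * π - θ := by nlinarith
      have := mul_le_mul hs1 h2 h.le h0
      linarith
  have h4 : (π - θ)^2 * (Real.sin θ ^ 2 + Real.cos θ ^ 2) = (π - θ)^2 := by rw [hpyth]; ring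
  nlinarith [key, h4]

lemma ufun_lt_one' {θ : ℝ} (h0 : 0 < θ) (h1 : θ ≤ π) : ufun θ < 1 := by
  have hs : Real.sin θ < θ := Real.sin_lt h0
  have hc : Real.cos θ ≤ 1 := Real.cos_le_one θ
  have : (π - θ) * Real.cos θ ≤ π - θ := by nlinarith
  have hπ := Real.pi_pos
  rw [ufun, div_lt_one hπ]; linarith

lemma neg_one_lt_ufun' {θ : ℝ} (h0 : 0 < θ) (h1 : θ < π) : -1 < ufun θ := by
  have hs : 0 ≤ Real.sin θ := Real.sin_nonneg_of_nonneg_of_le_pi h0.le h1.le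
  have hc : -1 ≤ Real.cos θ := Real.neg_one_le_cos θ
  have : -(π - θ) ≤ (π - θ) * Real.cos θ := by nlinarith
  have hπ := Real.pi_pos
  rw [ufun, lt_div_iff₀ hπ]; nlinarith

lemma gfun_hasDerivAt {θ : ℝ} (h : θ ∈ Set.Ioo 0 π) : HasDerivAt gfun (gdfun θ) θ := by
  obtain ⟨h0, h1⟩ := h
  have hu1 : ufun θ ≠ 1 := ne_of_lt (ufun_lt_one' h0 h1.le)
  have hu2 : ufun θ ≠ -1 := ne_of_gt (neg_one_lt_ufun' h0 h1)
  have hd : HasDerivAt ufun (-((π - θ) * Real.sin θ) / π) θ := by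
    have hmain : HasDerivAt (fun x : ℝ => (π - x) * Real.cos x + Real.sin x)
        ((0 - 1) * Real.cos θ + (π - θ) * (-Real.sin θ) + Real.cos θ) θ :=
      (((hasDerivAt_const θ π).sub (hasDerivAt_id' (x := θ))).mul (Real.hasDerivAt_cos θ)).add
        (Real.hasDerivAt_sin θ)
    have h2 := hmain.div_const π
    have heq : ((0 - 1) * Real.cos θ + (π - θ) * (-Real.sin θ) + Real.cos θ) / π
        = -((π - θ) * Real.sin θ) / π := by ring
    rw [heq] at h2
    exact h2
  have ha := Real.hasDerivAt_arccos hu2 hu1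
  have hcomp := ha.comp θ hd
  have heq2 : -(1 / Real.sqrt (1 - ufun θ ^ 2)) * (-((π - θ) * Real.sin θ) / π) = gdfun θ := by
    rw [gdfun]; ring
  rw [heq2] at hcomp
  exact hcomp

lemma gdfun_abs_le {θ : ℝ} (h : θ ∈ Set.Ioo 0 π) : |gdfun θ| ≤ 1 := by
  obtain ⟨h0, h1⟩ := h
  have hπ := Real.pi_pos
  have hu1 : ufun θ < 1 := ufun_lt_one' h0 h1.le
  have hu2 : -1 < ufun θ := neg_one_lt_ufun' h0 h1
  have hpos : 0 < 1 - ufun θ ^ 2 := by nlinarith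
  have hsq : 0 < Real.sqrt (1 - ufun θ ^ 2) := Real.sqrt_pos.2 hpos
  have hs : 0 ≤ Real.sin θ := Real.sin_nonneg_of_nonneg_of_le_pi h0.le h1.le
  have hnum : 0 ≤ (π - θ) * Real.sin θ / π :=
    div_nonneg (mul_nonneg (by linarith) hs) hπ.le
  have hgd0 : 0 ≤ gdfun θ := by
    rw [gdfun]; exact mul_nonneg hnum (by positivity)
  rw [abs_of_nonneg hgd0, gdfun]
  rw [mul_one_div, div_le_one hsq]
  rw [Real.le_sqrt hnum]
  have hu : ufun θ * π = (π - θ) * Real.cos θ + Real.sin θ := by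
    rw [ufun]; field_simp
  have hexp : 1 - ufun θ ^ 2 = (π ^ 2 - (ufun θ * π) ^ 2) / π ^ 2 := by
    field_simp
  rw [hexp, hu, div_pow]
  have hkey := key_ineq' h0.le h1.le
  gcongr
  exact hpos.le

lemma gfun_continuous : Continuous gfun := by
  apply Real.continuous_arccos.comp
  exact (((continuous_const.sub continuous_id).mul Real.continuous_cos).add
    Real.continuous_sin).div_const π

lemma gfun_lip {a b : ℝ} (ha : a ∈ Set.Icc 0 π) (hb : b ∈ Set.Icc 0 π) :
    |gfun a - gfun b| ≤ |a - b| := by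
  have main : ∀ u v : ℝ, u ∈ Set.Icc 0 π → v ∈ Set.Icc 0 π → u < v →
      |gfun u - gfun v| ≤ |u - v| := by
    intro u v hu hv huv
    obtain ⟨c, hc, hslope⟩ := exists_hasDerivAt_eq_slope gfun gdfun huv
      (gfun_continuous.continuousOn)
      (fun x hx => gfun_hasDerivAt ⟨lt_of_le_of_lt hu.1 hx.1, lt_of_lt_of_le hx.2 hv.2⟩)
    have hgd : |gdfun c| ≤ 1 := gdfun_abs_le ⟨lt_of_le_of_lt hu.1 hc.1, lt_of_lt_of_le hc.2 hv.2⟩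
    have hne : v - u ≠ 0 := by linarith
    have heq : gfun v - gfun u = gdfun c * (v - u) := by
      rw [hslope]; field_simp
    rw [abs_sub_comm, heq, abs_mul, abs_sub_comm u v]
    exact mul_le_mul_of_nonneg_right hgd (abs_nonneg _) |>.trans_eq (one_mul _)
  rcases lt_trichotomy a b with h | h | h
  · exact main a b ha hb h
  · simp [h]
  · rw [abs_sub_comm (gfun a), abs_sub_comm a]
    exact main b a hb ha h

variable {F : Type*} [NormedAddCommGroup F] [InnerProductSpace ℝ F]

lemma arccos_le_arccos' {x y : ℝ} (h : x ≤ y) : Real.arccos y ≤ Real.arccos x := by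
  rw [Real.arccos_eq_pi_div_two_sub_arcsin, Real.arccos_eq_pi_div_two_sub_arcsin]
  have := Real.monotone_arcsin h
  linarith

lemma unit_inner_mem {u v : F} (hu : ‖u‖ = 1) (hv : ‖v‖ = 1) : |⟪u, v⟫| ≤ 1 := by
  have := abs_real_inner_le_norm u v
  rw [hu, hv] at this; simpa using this

lemma unit_norm_sub_proj {u v : F} (hu : ‖u‖ = 1) (hv : ‖v‖ = 1) :
    ‖u - ⟪u, v⟫ • v‖ = Real.sqrt (1 - ⟪u, v⟫ ^ 2) := by
  have h2 : ‖u - ⟪u, v⟫ • v‖ ^ 2 = 1 - ⟪u, v⟫ ^ 2 := by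
    rw [norm_sub_sq_real, real_inner_smul_right, norm_smul, hu, hv, mul_one]
    rw [Real.norm_eq_abs, sq_abs]
    ring
  rw [← h2, Real.sqrt_sq (norm_nonneg _)]

lemma unit_triangle {u v w : F} (hu : ‖u‖ = 1) (hv : ‖v‖ = 1) (hw : ‖w‖ = 1) :
    Real.arccos ⟪u, w⟫ ≤ Real.arccos ⟪u, v⟫ + Real.arccos ⟪v, w⟫ := by
  have haa := abs_le.1 (unit_inner_mem hu hv)
  have hbb := abs_le.1 (unit_inner_mem hv hw)
  rcases le_or_gt π (Real.arccos ⟪u, v⟫ + Real.arccos ⟪v, w⟫) with h | h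
  · exact le_trans (Real.arccos_le_pi _) h
  · have hinner : ⟪u - ⟪u, v⟫ • v, w - ⟪w, v⟫ • v⟫ = ⟪u, w⟫ - ⟪u, v⟫ * ⟪v, w⟫ := by
      simp only [inner_sub_left, inner_sub_right, real_inner_smul_left, real_inner_smul_right,
        real_inner_self_eq_norm_sq, hv]
      rw [real_inner_comm v w]
      ring
    have hcs : -(‖u - ⟪u, v⟫ • v‖ * ‖w - ⟪w, v⟫ • v‖) ≤ ⟪u - ⟪u, v⟫ • v, w - ⟪w, v⟫ • v⟫ := by
      have := abs_le.1 (abs_real_inner_le_norm (u - ⟪u, v⟫ • v) (w - ⟪w, v⟫ • v))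
      linarith [this.1]
    rw [hinner, unit_norm_sub_proj hu hv, unit_norm_sub_proj hw hv] at hcs
    have hwv : ⟪w, v⟫ = ⟪v, w⟫ := real_inner_comm v w
    rw [hwv] at hcs
    have hkey : Real.cos (Real.arccos ⟪u, v⟫ + Real.arccos ⟪v, w⟫) ≤ ⟪u, w⟫ := by
      rw [Real.cos_add, Real.cos_arccos haa.1 haa.2, Real.cos_arccos hbb.1 hbb.2,
        Real.sin_arccos, Real.sin_arccos]
      linarith
    calc Real.arccos ⟪u, w⟫
        ≤ Real.arccos (Real.cos (Real.arccos ⟪u, v⟫ + Real.arccos ⟪v, w⟫)) :=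
          arccos_le_arccos' hkey
      _ = _ := Real.arccos_cos
          (add_nonneg (Real.arccos_nonneg _) (Real.arccos_nonneg _)) h.le

lemma unit_chord {u v : F} (hu : ‖u‖ = 1) (hv : ‖v‖ = 1) :
    Real.arccos ⟪u, v⟫ ≤ π / 2 * ‖u - v‖ := by
  have haa := abs_le.1 (unit_inner_mem hu hv)
  set t := Real.arccos ⟪u, v⟫ with hta
  have ht0 : 0 ≤ t := Real.arccos_nonneg _
  have htπ : t ≤ π := Real.arccos_le_pi _
  have hπ := Real.pi_pos
  have hct : Real.cos t = ⟪u, v⟫ := Real.cos_arccos haa.1 haa.2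
  have hs0 : 0 ≤ Real.sin (t / 2) :=
    Real.sin_nonneg_of_nonneg_of_le_pi (by linarith) (by linarith)
  have hnsq : ‖u - v‖ ^ 2 = 2 - 2 * ⟪u, v⟫ := by
    rw [norm_sub_sq_real, hu, hv]; ring
  have hhalf : Real.sin (t / 2) ^ 2 = (1 - Real.cos t) / 2 := by
    have := Real.sin_sq_eq_half_sub (t / 2)
    rw [show 2 * (t / 2) = t by ring] at this
    linarith
  have hn : ‖u - v‖ = 2 * Real.sin (t / 2) := by
    have h1 : ‖u - v‖ ^ 2 = (2 * Real.sin (t / 2)) ^ 2 := by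
      rw [hnsq, mul_pow, hhalf, hct]; ring
    have h2 := congrArg Real.sqrt h1
    rwa [Real.sqrt_sq (norm_nonneg _), Real.sqrt_sq (by positivity)] at h2
  have hjordan : 2 / π * (t / 2) ≤ Real.sin (t / 2) :=
    Real.mul_le_sin (by linarith) (by linarith)
  have ht : t / π ≤ Real.sin (t / 2) := by
    have heq3 : 2 / π * (t / 2) = t / π := by field_simp
    rwa [heq3] at hjordan
  have := (div_le_iff₀ hπ).1 ht
  rw [hn]
  nlinarith

lemma norm_hat {x : F} (hx : x ≠ 0) : ‖(‖x‖⁻¹ • x)‖ = 1 := by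
  rw [norm_smul, norm_inv, norm_norm, inv_mul_cancel₀ (norm_ne_zero_iff.2 hx)]

lemma hat_sub_le_aux {x y : F} (hx : x ≠ 0) (hy : y ≠ 0) (hxy : ‖y‖ ≤ ‖x‖) :
    ‖(‖x‖⁻¹ • x) - (‖y‖⁻¹ • y)‖ ≤ 2 * ‖x‖⁻¹ * ‖x - y‖ := by
  have hx0 : (0:ℝ) < ‖x‖ := norm_pos_iff.2 hx
  have hy0 : (0:ℝ) < ‖y‖ := norm_pos_iff.2 hy
  have step : ‖(‖x‖⁻¹ • x) - (‖y‖⁻¹ • y)‖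
      ≤ ‖(‖x‖⁻¹ • x) - (‖x‖⁻¹ • y)‖ + ‖(‖x‖⁻¹ • y) - (‖y‖⁻¹ • y)‖ :=
    norm_sub_le_norm_sub_add_norm_sub _ _ _
  have h1 : ‖(‖x‖⁻¹ • x) - (‖x‖⁻¹ • y)‖ = ‖x‖⁻¹ * ‖x - y‖ := by
    rw [← smul_sub, norm_smul, norm_inv, norm_norm]
  have h2 : ‖(‖x‖⁻¹ • y) - (‖y‖⁻¹ • y)‖ = (‖y‖⁻¹ - ‖x‖⁻¹) * ‖y‖ := by
    rw [← sub_smul, norm_smul, Real.norm_eq_abs, abs_of_nonpos (by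
      simp only [sub_nonpos]
      exact inv_anti₀ hy0 hxy)]
    ring
  have h3 : (‖y‖⁻¹ - ‖x‖⁻¹) * ‖y‖ = (‖x‖ - ‖y‖) * ‖x‖⁻¹ := by
    field_simp
  have h4 : ‖x‖ - ‖y‖ ≤ ‖x - y‖ :=
    (le_abs_self _).trans (abs_norm_sub_norm_le x y)
  calc ‖(‖x‖⁻¹ • x) - (‖y‖⁻¹ • y)‖ ≤ ‖x‖⁻¹ * ‖x - y‖ + (‖x‖ - ‖y‖) * ‖x‖⁻¹ := by
        rw [← h3]; linarith [step, h1.le, h2.le, h1.ge, h2.ge]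
    _ ≤ ‖x‖⁻¹ * ‖x - y‖ + ‖x - y‖ * ‖x‖⁻¹ := by
        apply add_le_add_right
        exact mul_le_mul_of_nonneg_right h4 (by positivity)
    _ = 2 * ‖x‖⁻¹ * ‖x - y‖ := by ring

lemma hat_sub_le {x y : F} (hx : x ≠ 0) (hy : y ≠ 0) :
    ‖(‖x‖⁻¹ • x) - (‖y‖⁻¹ • y)‖ ≤ 2 * max ‖x‖⁻¹ ‖y‖⁻¹ * ‖x - y‖ := by
  rcases le_total ‖y‖ ‖x‖ with h | h
  · calc ‖(‖x‖⁻¹ • x) - (‖y‖⁻¹ • y)‖ ≤ 2 * ‖x‖⁻¹ * ‖x - y‖ := hat_sub_le_aux hx hy h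
      _ ≤ 2 * max ‖x‖⁻¹ ‖y‖⁻¹ * ‖x - y‖ := by
          apply mul_le_mul_of_nonneg_right _ (norm_nonneg _)
          have := le_max_left ‖x‖⁻¹ ‖y‖⁻¹
          linarith
  · rw [norm_sub_rev ((‖x‖⁻¹ • x)), norm_sub_rev x]
    calc ‖(‖y‖⁻¹ • y) - (‖x‖⁻¹ • x)‖ ≤ 2 * ‖y‖⁻¹ * ‖y - x‖ := hat_sub_le_aux hy hx h
      _ ≤ 2 * max ‖x‖⁻¹ ‖y‖⁻¹ * ‖y - x‖ := by
          apply mul_le_mul_of_nonneg_right _ (norm_nonneg _)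
          have := le_max_right ‖x‖⁻¹ ‖y‖⁻¹
          linarith

lemma sin_lip (a b : ℝ) : |Real.sin a - Real.sin b| ≤ |a - b| := by
  rw [Real.sin_sub_sin, abs_mul, abs_mul, abs_two]
  have h1 : |Real.sin ((a - b) / 2)| ≤ |(a - b) / 2| := Real.abs_sin_le_abs
  have h2 : |Real.cos ((a + b) / 2)| ≤ 1 := Real.abs_cos_le_one _
  calc 2 * |Real.sin ((a - b) / 2)| * |Real.cos ((a + b) / 2)|
      ≤ 2 * |(a - b) / 2| * 1 := by
        apply mul_le_mul _ h2 (abs_nonneg _) (by positivity)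
        exact mul_le_mul_of_nonneg_left h1 (by norm_num)
    _ = |a - b| := by rw [mul_one, abs_div, abs_two]; ring

lemma abs_prod_sub_prod (a b : ℕ → ℝ) : ∀ s : Finset ℕ,
    (∀ i ∈ s, a i ∈ Set.Icc (0:ℝ) 1) → (∀ i ∈ s, b i ∈ Set.Icc (0:ℝ) 1) →
    |(∏ i ∈ s, a i) - ∏ i ∈ s, b i| ≤ ∑ i ∈ s, |a i - b i| := by
  intro s
  induction s using Finset.cons_induction with
  | empty => simp
  | cons j s hj ih =>
    intro ha hb
    rw [Finset.prod_cons, Finset.prod_cons, Finset.sum_cons]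
    have ha' : ∀ i ∈ s, a i ∈ Set.Icc (0:ℝ) 1 := fun i hi => ha i (Finset.mem_cons_of_mem hi)
    have hb' : ∀ i ∈ s, b i ∈ Set.Icc (0:ℝ) 1 := fun i hi => hb i (Finset.mem_cons_of_mem hi)
    have hPa : (∏ i ∈ s, a i) ∈ Set.Icc (0:ℝ) 1 :=
      ⟨Finset.prod_nonneg fun i hi => (ha' i hi).1,
        Finset.prod_le_one (fun i hi => (ha' i hi).1) fun i hi => (ha' i hi).2⟩
    have hPb : (∏ i ∈ s, b i) ∈ Set.Icc (0:ℝ) 1 :=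
      ⟨Finset.prod_nonneg fun i hi => (hb' i hi).1,
        Finset.prod_le_one (fun i hi => (hb' i hi).1) fun i hi => (hb' i hi).2⟩
    have haj := ha j (Finset.mem_cons_self _ _)
    have key : a j * ∏ i ∈ s, a i - b j * ∏ i ∈ s, b i
        = (a j - b j) * ∏ i ∈ s, b i + a j * ((∏ i ∈ s, a i) - ∏ i ∈ s, b i) := by ring
    calc |a j * ∏ i ∈ s, a i - b j * ∏ i ∈ s, b i|
        ≤ |a j - b j| * |∏ i ∈ s, b i| + |a j| * |(∏ i ∈ s, a i) - ∏ i ∈ s, b i| := by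
          rw [key]
          exact (abs_add_le _ _).trans (by rw [abs_mul, abs_mul])
      _ ≤ |a j - b j| * 1 + 1 * ∑ i ∈ s, |a i - b i| := by
          apply add_le_add
          · exact mul_le_mul_of_nonneg_left (abs_le.2 ⟨by linarith [hPb.1], hPb.2⟩) (abs_nonneg _)
          · apply mul_le_mul (abs_le.2 ⟨by linarith [haj.1], haj.2⟩) (ih ha' hb')
              (abs_nonneg _) zero_le_one
      _ = |a j - b j| + ∑ i ∈ s, |a i - b i| := by ring

lemma mul_abs_sub (a b c e : ℝ) : |a * c - b * e| ≤ |a - b| * |c| + |b| * |c - e| := by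
  have key : a * c - b * e = (a - b) * c + b * (c - e) := by ring
  rw [key]
  exact (abs_add_le _ _).trans (by rw [abs_mul, abs_mul])

lemma gauss_sum {d : ℕ} (hd : 1 ≤ d) :
    ∑ i ∈ Finset.range d, ((d - (i + 1) : ℕ) : ℝ) = (d : ℝ) * ((d : ℝ) - 1) / 2 := by
  have h1 : ∀ i ∈ Finset.range d, ((d - (i + 1) : ℕ) : ℝ) = ((d - 1 - i : ℕ) : ℝ) := by
    intro i _; congr 1; omega
  rw [Finset.sum_congr rfl h1, Finset.sum_range_reflect (fun j => ((j : ℕ) : ℝ)) d]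
  have h2 := congrArg (Nat.cast : ℕ → ℝ) (Finset.sum_range_id_mul_two d)
  push_cast [Nat.cast_sub hd] at h2
  push_cast
  linarith

lemma scalar_bounds (d : ℕ) (hd : 1 ≤ d) (Tx Ty : ℕ → ℝ) (Δ : ℝ) (hΔ : 0 ≤ Δ)
    (hmx : ∀ i, Tx i ∈ Set.Icc 0 π) (hmy : ∀ i, Ty i ∈ Set.Icc 0 π)
    (hT : ∀ i, |Tx i - Ty i| ≤ Δ) :
    |((π - 2*Tx d)/π) * (∏ i ∈ Finset.range d, (π - Tx i)/π)
      - ((π - 2*Ty d)/π) * (∏ i ∈ Finset.range d, (π - Ty i)/π)| ≤ (2 + d) * Δ / π ∧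
    |(2*Real.sin (Tx d)/π + ((π - 2*Tx d)/π) * ∑ i ∈ Finset.range d,
        (Real.sin (Tx i)/π) * ∏ j ∈ Finset.Ico (i+1) d, (π - Tx j)/π)
      - (2*Real.sin (Ty d)/π + ((π - 2*Ty d)/π) * ∑ i ∈ Finset.range d,
        (Real.sin (Ty i)/π) * ∏ j ∈ Finset.Ico (i+1) d, (π - Ty j)/π)|
      ≤ (2 + 2*(d:ℝ)/π + d + d*((d:ℝ)-1)/(2*π)) * Δ / π ∧
    |2*Real.sin (Ty d)/π + ((π - 2*Ty d)/π) * ∑ i ∈ Finset.range d,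
        (Real.sin (Ty i)/π) * ∏ j ∈ Finset.Ico (i+1) d, (π - Ty j)/π| ≤ (2 + d)/π := by
  have hπ := Real.pi_pos
  -- generic facts parametrized by T
  have hf1 : ∀ (T : ℕ → ℝ), (∀ i, T i ∈ Set.Icc 0 π) → ∀ i, (π - T i)/π ∈ Set.Icc (0:ℝ) 1 := by
    intro T hm i
    constructor
    · exact div_nonneg (by linarith [(hm i).2]) hπ.le
    · rw [div_le_one hπ]; linarith [(hm i).1]
  have hPmem : ∀ (T : ℕ → ℝ), (∀ i, T i ∈ Set.Icc 0 π) → ∀ (s : Finset ℕ),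
      (∏ i ∈ s, (π - T i)/π) ∈ Set.Icc (0:ℝ) 1 := by
    intro T hm s
    exact ⟨Finset.prod_nonneg fun i _ => (hf1 T hm i).1,
      Finset.prod_le_one (fun i _ => (hf1 T hm i).1) fun i _ => (hf1 T hm i).2⟩
  have hf0 : ∀ (T : ℕ → ℝ), (∀ i, T i ∈ Set.Icc 0 π) → |(π - 2*T d)/π| ≤ 1 := by
    intro T hm
    rw [abs_div, abs_of_pos hπ, div_le_one hπ, abs_le]
    exact ⟨by linarith [(hm d).2], by linarith [(hm d).1]⟩
  have hSmem : ∀ (T : ℕ → ℝ), (∀ i, T i ∈ Set.Icc 0 π) →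
      |∑ i ∈ Finset.range d, (Real.sin (T i)/π) * ∏ j ∈ Finset.Ico (i+1) d, (π - T j)/π|
        ≤ d / π := by
    intro T hm
    have hterm : ∀ i ∈ Finset.range d,
        |(Real.sin (T i)/π) * ∏ j ∈ Finset.Ico (i+1) d, (π - T j)/π| ≤ 1/π := by
      intro i _
      rw [abs_mul]
      have h1 : |Real.sin (T i)/π| ≤ 1/π := by
        rw [abs_div, abs_of_pos hπ]
        exact div_le_div_of_nonneg_right (Real.abs_sin_le_one _) hπ.le |>.trans (le_refl _)
      have h2 : |∏ j ∈ Finset.Ico (i+1) d, (π - T j)/π| ≤ 1 := by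
        have := hPmem T hm (Finset.Ico (i+1) d)
        rw [abs_le]; exact ⟨by linarith [this.1], this.2⟩
      calc |Real.sin (T i)/π| * |∏ j ∈ Finset.Ico (i+1) d, (π - T j)/π|
          ≤ (1/π) * 1 := mul_le_mul h1 h2 (abs_nonneg _) (by positivity)
        _ = 1/π := by ring
    calc |∑ i ∈ Finset.range d, (Real.sin (T i)/π) * ∏ j ∈ Finset.Ico (i+1) d, (π - T j)/π|
        ≤ ∑ i ∈ Finset.range d,
            |(Real.sin (T i)/π) * ∏ j ∈ Finset.Ico (i+1) d, (π - T j)/π| :=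
          Finset.abs_sum_le_sum_abs _ _
      _ ≤ ∑ _i ∈ Finset.range d, (1/π) := Finset.sum_le_sum hterm
      _ = d / π := by rw [Finset.sum_const, Finset.card_range, nsmul_eq_mul]; ring
  -- differences
  have hf1diff : ∀ (s : Finset ℕ),
      |(∏ i ∈ s, (π - Tx i)/π) - ∏ i ∈ s, (π - Ty i)/π| ≤ (s.card : ℝ) * (Δ/π) := by
    intro s
    refine (abs_prod_sub_prod _ _ s (fun i _ => hf1 Tx hmx i) (fun i _ => hf1 Ty hmy i)).trans ?_
    have hterm : ∀ i ∈ s, |(π - Tx i)/π - (π - Ty i)/π| ≤ Δ/π := by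
      intro i _
      have heq : (π - Tx i)/π - (π - Ty i)/π = (Ty i - Tx i)/π := by ring
      rw [heq, abs_div, abs_of_pos hπ, abs_sub_comm]
      exact div_le_div_of_nonneg_right (hT i) hπ.le |>.trans (le_refl _)
    calc ∑ i ∈ s, |(π - Tx i)/π - (π - Ty i)/π| ≤ ∑ _i ∈ s, (Δ/π) :=
          Finset.sum_le_sum hterm
      _ = (s.card : ℝ) * (Δ/π) := by rw [Finset.sum_const, nsmul_eq_mul]
  have hf0diff : |(π - 2*Tx d)/π - (π - 2*Ty d)/π| ≤ 2*Δ/π := by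
    have heq : (π - 2*Tx d)/π - (π - 2*Ty d)/π = 2*(Ty d - Tx d)/π := by ring
    rw [heq, abs_div, abs_of_pos hπ, abs_mul, abs_two, abs_sub_comm]
    apply div_le_div_of_nonneg_right _ hπ.le |>.trans (le_refl _)
    linarith [hT d]
  have hFdiff : |((π - 2*Tx d)/π) * (∏ i ∈ Finset.range d, (π - Tx i)/π)
      - ((π - 2*Ty d)/π) * (∏ i ∈ Finset.range d, (π - Ty i)/π)| ≤ (2 + d) * Δ / π := by
    refine (mul_abs_sub _ _ _ _).trans ?_
    have h1 : |∏ i ∈ Finset.range d, (π - Tx i)/π| ≤ 1 := by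
      have := hPmem Tx hmx (Finset.range d)
      rw [abs_le]; exact ⟨by linarith [this.1], this.2⟩
    have h2 := hf1diff (Finset.range d)
    rw [Finset.card_range] at h2
    calc |(π - 2*Tx d)/π - (π - 2*Ty d)/π| * |∏ i ∈ Finset.range d, (π - Tx i)/π|
          + |(π - 2*Ty d)/π| * |(∏ i ∈ Finset.range d, (π - Tx i)/π)
            - ∏ i ∈ Finset.range d, (π - Ty i)/π|
        ≤ (2*Δ/π) * 1 + 1 * ((d:ℝ) * (Δ/π)) := by
          apply add_le_add
          · exact mul_le_mul hf0diff h1 (abs_nonneg _) (by positivity)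
          · exact mul_le_mul (hf0 Ty hmy) h2 (abs_nonneg _) zero_le_one
      _ = (2 + d) * Δ / π := by ring
  have hSdiff : |(∑ i ∈ Finset.range d, (Real.sin (Tx i)/π) * ∏ j ∈ Finset.Ico (i+1) d,
      (π - Tx j)/π) - ∑ i ∈ Finset.range d, (Real.sin (Ty i)/π) * ∏ j ∈ Finset.Ico (i+1) d,
      (π - Ty j)/π| ≤ (d:ℝ)*(Δ/π) + ((d:ℝ)*((d:ℝ)-1)/2) * (Δ/π^2) := by
    rw [← Finset.sum_sub_distrib]
    refine (Finset.abs_sum_le_sum_abs _ _).trans ?_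
    have hterm : ∀ i ∈ Finset.range d,
        |(Real.sin (Tx i)/π) * (∏ j ∈ Finset.Ico (i+1) d, (π - Tx j)/π)
          - (Real.sin (Ty i)/π) * ∏ j ∈ Finset.Ico (i+1) d, (π - Ty j)/π|
        ≤ Δ/π + ((d - (i+1) : ℕ) : ℝ) * (Δ/π^2) := by
      intro i _
      refine (mul_abs_sub _ _ _ _).trans ?_
      have hu : |Real.sin (Tx i)/π - Real.sin (Ty i)/π| ≤ Δ/π := by
        have heq : Real.sin (Tx i)/π - Real.sin (Ty i)/π
            = (Real.sin (Tx i) - Real.sin (Ty i))/π := by ring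
        rw [heq, abs_div, abs_of_pos hπ]
        exact div_le_div_of_nonneg_right ((sin_lip _ _).trans (hT i)) hπ.le |>.trans (le_refl _)
      have hv : |∏ j ∈ Finset.Ico (i+1) d, (π - Tx j)/π| ≤ 1 := by
        have := hPmem Tx hmx (Finset.Ico (i+1) d)
        rw [abs_le]; exact ⟨by linarith [this.1], this.2⟩
      have huy : |Real.sin (Ty i)/π| ≤ 1/π := by
        rw [abs_div, abs_of_pos hπ]
        exact div_le_div_of_nonneg_right (Real.abs_sin_le_one _) hπ.le |>.trans (le_refl _)
      calc |Real.sin (Tx i)/π - Real.sin (Ty i)/π| * |∏ j ∈ Finset.Ico (i+1) d, (π - Tx j)/π|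
            + |Real.sin (Ty i)/π| * |(∏ j ∈ Finset.Ico (i+1) d, (π - Tx j)/π)
              - ∏ j ∈ Finset.Ico (i+1) d, (π - Ty j)/π|
          ≤ (Δ/π) * 1 + (1/π) * (((d - (i+1) : ℕ) : ℝ) * (Δ/π)) := by
            apply add_le_add
            · exact mul_le_mul hu hv (abs_nonneg _) (by positivity)
            · refine mul_le_mul huy ?_ (abs_nonneg _) (by positivity)
              have := hf1diff (Finset.Ico (i+1) d)
              rwa [Nat.card_Ico] at this
        _ = Δ/π + ((d - (i+1) : ℕ) : ℝ) * (Δ/π^2) := by ring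
    calc ∑ i ∈ Finset.range d, |(Real.sin (Tx i)/π) * (∏ j ∈ Finset.Ico (i+1) d, (π - Tx j)/π)
          - (Real.sin (Ty i)/π) * ∏ j ∈ Finset.Ico (i+1) d, (π - Ty j)/π|
        ≤ ∑ i ∈ Finset.range d, (Δ/π + ((d - (i+1) : ℕ) : ℝ) * (Δ/π^2)) :=
          Finset.sum_le_sum hterm
      _ = (d:ℝ)*(Δ/π) + ((d:ℝ)*((d:ℝ)-1)/2) * (Δ/π^2) := by
          rw [Finset.sum_add_distrib, Finset.sum_const, Finset.card_range, nsmul_eq_mul,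
            ← Finset.sum_mul, gauss_sum hd]
  refine ⟨hFdiff, ?_, ?_⟩
  · have heq : (2*Real.sin (Tx d)/π + ((π - 2*Tx d)/π) * ∑ i ∈ Finset.range d,
        (Real.sin (Tx i)/π) * ∏ j ∈ Finset.Ico (i+1) d, (π - Tx j)/π)
      - (2*Real.sin (Ty d)/π + ((π - 2*Ty d)/π) * ∑ i ∈ Finset.range d,
        (Real.sin (Ty i)/π) * ∏ j ∈ Finset.Ico (i+1) d, (π - Ty j)/π)
      = (2*Real.sin (Tx d)/π - 2*Real.sin (Ty d)/π)
        + (((π - 2*Tx d)/π) * (∑ i ∈ Finset.range d,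
            (Real.sin (Tx i)/π) * ∏ j ∈ Finset.Ico (i+1) d, (π - Tx j)/π)
          - ((π - 2*Ty d)/π) * ∑ i ∈ Finset.range d,
            (Real.sin (Ty i)/π) * ∏ j ∈ Finset.Ico (i+1) d, (π - Ty j)/π) := by ring
    rw [heq]
    refine (abs_add_le _ _).trans ?_
    have h1 : |2*Real.sin (Tx d)/π - 2*Real.sin (Ty d)/π| ≤ 2*Δ/π := by
      have heq2 : 2*Real.sin (Tx d)/π - 2*Real.sin (Ty d)/π
          = 2*(Real.sin (Tx d) - Real.sin (Ty d))/π := by ring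
      rw [heq2, abs_div, abs_of_pos hπ, abs_mul, abs_two]
      apply div_le_div_of_nonneg_right _ hπ.le |>.trans (le_refl _)
      linarith [(sin_lip (Tx d) (Ty d)).trans (hT d)]
    have h2 : |((π - 2*Tx d)/π) * (∑ i ∈ Finset.range d,
          (Real.sin (Tx i)/π) * ∏ j ∈ Finset.Ico (i+1) d, (π - Tx j)/π)
        - ((π - 2*Ty d)/π) * ∑ i ∈ Finset.range d,
          (Real.sin (Ty i)/π) * ∏ j ∈ Finset.Ico (i+1) d, (π - Ty j)/π|
        ≤ (2*Δ/π) * ((d:ℝ)/π) + 1 * ((d:ℝ)*(Δ/π) + ((d:ℝ)*((d:ℝ)-1)/2) * (Δ/π^2)) := by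
      refine (mul_abs_sub _ _ _ _).trans ?_
      apply add_le_add
      · exact mul_le_mul hf0diff (hSmem Tx hmx) (abs_nonneg _) (by positivity)
      · exact mul_le_mul (hf0 Ty hmy) hSdiff (abs_nonneg _) zero_le_one
    calc _ ≤ (2*Δ/π) + ((2*Δ/π) * ((d:ℝ)/π)
          + 1 * ((d:ℝ)*(Δ/π) + ((d:ℝ)*((d:ℝ)-1)/2) * (Δ/π^2))) := add_le_add h1 h2
      _ = (2 + 2*(d:ℝ)/π + d + d*((d:ℝ)-1)/(2*π)) * Δ / π := by ring
  · refine (abs_add_le _ _).trans ?_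
    have h1 : |2*Real.sin (Ty d)/π| ≤ 2/π := by
      rw [abs_div, abs_of_pos hπ, abs_mul, abs_two]
      apply div_le_div_of_nonneg_right _ hπ.le |>.trans (le_refl _)
      linarith [Real.abs_sin_le_one (Ty d)]
    have h2 : |((π - 2*Ty d)/π) * ∑ i ∈ Finset.range d,
        (Real.sin (Ty i)/π) * ∏ j ∈ Finset.Ico (i+1) d, (π - Ty j)/π| ≤ 1 * ((d:ℝ)/π) := by
      rw [abs_mul]
      exact mul_le_mul (hf0 Ty hmy) (hSmem Ty hmy) (abs_nonneg _) zero_le_one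
    calc |2*Real.sin (Ty d)/π| + |((π - 2*Ty d)/π) * ∑ i ∈ Finset.range d,
          (Real.sin (Ty i)/π) * ∏ j ∈ Finset.Ico (i+1) d, (π - Ty j)/π|
        ≤ 2/π + 1 * ((d:ℝ)/π) := add_le_add h1 h2
      _ = (2 + d)/π := by ring

end Statement11Aux

section Statement11Main

variable {k : ℕ}

lemma ang_eq_unit (x z : EuclideanSpace ℝ (Fin k)) :
    ang x z = Real.arccos ⟪(‖x‖⁻¹ • x), (‖z‖⁻¹ • z)⟫ := by
  rw [ang]
  congr 1
  rw [real_inner_smul_left, real_inner_smul_right, div_eq_mul_inv, mul_inv]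
  ring

lemma ang_lip {xstar x y : EuclideanSpace ℝ (Fin k)} (hxs : xstar ≠ 0) (hx : x ≠ 0)
    (hy : y ≠ 0) :
    |ang x xstar - ang y xstar| ≤ π * max ‖x‖⁻¹ ‖y‖⁻¹ * ‖x - y‖ := by
  have hxh : ‖(‖x‖⁻¹ • x)‖ = 1 := norm_hat hx
  have hyh : ‖(‖y‖⁻¹ • y)‖ = 1 := norm_hat hy
  have hsh : ‖(‖xstar‖⁻¹ • xstar)‖ = 1 := norm_hat hxs
  have t1 := unit_triangle hxh hyh hsh
  have t2 := unit_triangle hyh hxh hsh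
  have hcomm : ⟪(‖y‖⁻¹ • y), (‖x‖⁻¹ • x)⟫ = ⟪(‖x‖⁻¹ • x), (‖y‖⁻¹ • y)⟫ :=
    real_inner_comm _ _
  rw [hcomm] at t2
  have hchord := unit_chord hxh hyh
  have hhat := hat_sub_le hx hy
  have hπ2 : (0:ℝ) ≤ π / 2 := by linarith [Real.pi_pos]
  have hc2 : π / 2 * ‖(‖x‖⁻¹ • x) - (‖y‖⁻¹ • y)‖
      ≤ π / 2 * (2 * max ‖x‖⁻¹ ‖y‖⁻¹ * ‖x - y‖) := mul_le_mul_of_nonneg_left hhat hπ2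
  rw [ang_eq_unit x xstar, ang_eq_unit y xstar, abs_sub_le_iff]
  constructor <;> nlinarith [t1, t2, hchord, hc2]

lemma thetaBar_mem (xstar x : EuclideanSpace ℝ (Fin k)) (i : ℕ) :
    thetaBar xstar x i ∈ Set.Icc 0 π := by
  cases i with
  | zero =>
      simp only [thetaBar, ang]
      exact ⟨Real.arccos_nonneg _, Real.arccos_le_pi _⟩
  | succ n =>
      simp only [thetaBar, gfun]
      exact ⟨Real.arccos_nonneg _, Real.arccos_le_pi _⟩

lemma thetaBar_lip {xstar x y : EuclideanSpace ℝ (Fin k)} (hxs : xstar ≠ 0) (hx : x ≠ 0)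
    (hy : y ≠ 0) (i : ℕ) :
    |thetaBar xstar x i - thetaBar xstar y i| ≤ π * max ‖x‖⁻¹ ‖y‖⁻¹ * ‖x - y‖ := by
  induction i with
  | zero => exact ang_lip hxs hx hy
  | succ n ih =>
      simp only [thetaBar]
      exact (gfun_lip (thetaBar_mem xstar x n) (thetaBar_mem xstar y n)).trans ih


lemma hvec_eq (d : ℕ) (xstar x : EuclideanSpace ℝ (Fin k)) (hxs : xstar ≠ 0) (hx : x ≠ 0) :
    hvec d xstar x = ((2:ℝ)^d)⁻¹ •
      ((((π - 2 * thetaBar xstar x d) / π)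
          * ∏ i ∈ Finset.range d, (π - thetaBar xstar x i) / π) • xstar
        + (x - (‖xstar‖ * (2 * Real.sin (thetaBar xstar x d) / π
            + ((π - 2 * thetaBar xstar x d) / π) *
              ∑ i ∈ Finset.range d, (Real.sin (thetaBar xstar x i) / π) *
                ∏ j ∈ Finset.Ico (i + 1) d, (π - thetaBar xstar x j) / π)) • (‖x‖⁻¹ • x))) := by
  rw [hvec]
  congr 1
  congr 1
  · rw [smul_smul, mul_assoc, mul_inv_cancel₀ (norm_ne_zero_iff.2 hxs), mul_one]
  · rw [sub_smul, smul_smul, mul_inv_cancel₀ (norm_ne_zero_iff.2 hx), one_smul]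

end Statement11Main

set_option maxHeartbeats 2000000 in
/-- Lipschitz-type bound on `x ↦ h_x` away from the origin. -/
theorem statement_11 {k d : ℕ} (hd : 2 ≤ d) (xstar : EuclideanSpace ℝ (Fin k))
    (hxs : xstar ≠ 0) :
    (∀ x y : EuclideanSpace ℝ (Fin k), x ≠ 0 → y ≠ 0 →
      ‖hvec d xstar x - hvec d xstar y‖ ≤
        ((2 * (d : ℝ) ^ 2 + (10 * π + 8) * d + 20 * π) * ‖xstar‖ / (π ^ 2 * 2 ^ d)
            * max ‖x‖⁻¹ ‖y‖⁻¹ + 1 / 2 ^ d) * ‖x - y‖) ∧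
    ∀ r : ℝ, 0 < r → ∀ x y : EuclideanSpace ℝ (Fin k),
      x ∉ Metric.closedBall 0 (r * ‖xstar‖) → y ∉ Metric.closedBall 0 (r * ‖xstar‖) →
      ‖hvec d xstar x - hvec d xstar y‖ ≤
        ((2 * (d : ℝ) ^ 2 + (10 * π + 8) * d + 20 * π) / (r * π ^ 2 * 2 ^ d) + 1 / 2 ^ d)
          * ‖x - y‖ := by
  have hπ := Real.pi_pos
  have hD0 : (0:ℝ) ≤ (d:ℝ) := Nat.cast_nonneg d
  have hmain : ∀ x y : EuclideanSpace ℝ (Fin k), x ≠ 0 → y ≠ 0 →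
      ‖hvec d xstar x - hvec d xstar y‖ ≤
        ((2 * (d : ℝ) ^ 2 + (10 * π + 8) * d + 20 * π) * ‖xstar‖ / (π ^ 2 * 2 ^ d)
            * max ‖x‖⁻¹ ‖y‖⁻¹ + 1 / 2 ^ d) * ‖x - y‖ := by
    intro x y hx hy
    have hM0 : (0:ℝ) ≤ max ‖x‖⁻¹ ‖y‖⁻¹ :=
      le_trans (inv_nonneg.2 (norm_nonneg x)) (le_max_left _ _)
    have hN0 : (0:ℝ) ≤ ‖x - y‖ := norm_nonneg _
    have hX0 : (0:ℝ) ≤ ‖xstar‖ := norm_nonneg _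
    obtain ⟨hF, hR, hRy⟩ := scalar_bounds d (by omega) (thetaBar xstar x) (thetaBar xstar y)
      (π * max ‖x‖⁻¹ ‖y‖⁻¹ * ‖x - y‖)
      (mul_nonneg (mul_nonneg hπ.le hM0) hN0)
      (thetaBar_mem xstar x) (thetaBar_mem xstar y) (thetaBar_lip hxs hx hy)
    set M := max ‖x‖⁻¹ ‖y‖⁻¹ with hMdef
    set N := ‖x - y‖ with hNdef
    set X := ‖xstar‖ with hXdef
    set D := (d:ℝ) with hDdef
    set Fx := ((π - 2 * thetaBar xstar x d) / π)
          * ∏ i ∈ Finset.range d, (π - thetaBar xstar x i) / π with hFxdef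
    set Fy := ((π - 2 * thetaBar xstar y d) / π)
          * ∏ i ∈ Finset.range d, (π - thetaBar xstar y i) / π with hFydef
    set Rx := 2 * Real.sin (thetaBar xstar x d) / π
            + ((π - 2 * thetaBar xstar x d) / π) *
              ∑ i ∈ Finset.range d, (Real.sin (thetaBar xstar x i) / π) *
                ∏ j ∈ Finset.Ico (i + 1) d, (π - thetaBar xstar x j) / π with hRxdef
    set Ry := 2 * Real.sin (thetaBar xstar y d) / π
            + ((π - 2 * thetaBar xstar y d) / π) *
              ∑ i ∈ Finset.range d, (Real.sin (thetaBar xstar y i) / π) *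
                ∏ j ∈ Finset.Ico (i + 1) d, (π - thetaBar xstar y j) / π with hRydef
    have hhat : ‖(‖x‖⁻¹ • x) - (‖y‖⁻¹ • y)‖ ≤ 2 * M * N := hat_sub_le hx hy
    have hxhat : ‖(‖x‖⁻¹ • x)‖ = 1 := norm_hat hx
    -- rewrite hvec
    rw [hvec_eq d xstar x hxs hx, hvec_eq d xstar y hxs hy, ← smul_sub, norm_smul,
      Real.norm_eq_abs, abs_of_pos (show (0:ℝ) < ((2:ℝ)^d)⁻¹ by positivity)]
    have hvecid : (Fx • xstar + (x - (X * Rx) • (‖x‖⁻¹ • x)))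
          - (Fy • xstar + (y - (X * Ry) • (‖y‖⁻¹ • y)))
        = (Fx - Fy) • xstar + ((x - y)
            - ((X * Rx - X * Ry) • (‖x‖⁻¹ • x) + (X * Ry) • ((‖x‖⁻¹ • x) - (‖y‖⁻¹ • y)))) := by
      module
    rw [hvecid]
    -- triangle inequality
    have htri : ‖(Fx - Fy) • xstar + ((x - y)
            - ((X * Rx - X * Ry) • (‖x‖⁻¹ • x) + (X * Ry) • ((‖x‖⁻¹ • x) - (‖y‖⁻¹ • y))))‖
        ≤ |Fx - Fy| * X + (N + (X * |Rx - Ry| + X * (|Ry| * ‖(‖x‖⁻¹ • x) - (‖y‖⁻¹ • y)‖))) := by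
      have e1 : ‖(Fx - Fy) • xstar‖ = |Fx - Fy| * X := by
        rw [norm_smul, Real.norm_eq_abs]
      have e2 : ‖(X * Rx - X * Ry) • (‖x‖⁻¹ • x)‖ = X * |Rx - Ry| := by
        rw [norm_smul, Real.norm_eq_abs, hxhat, mul_one, ← mul_sub, abs_mul,
          abs_of_nonneg hX0]
      have e3 : ‖(X * Ry) • ((‖x‖⁻¹ • x) - (‖y‖⁻¹ • y))‖
          = X * (|Ry| * ‖(‖x‖⁻¹ • x) - (‖y‖⁻¹ • y)‖) := by
        rw [norm_smul, Real.norm_eq_abs, abs_mul, abs_of_nonneg hX0, mul_assoc]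
      calc ‖(Fx - Fy) • xstar + ((x - y)
            - ((X * Rx - X * Ry) • (‖x‖⁻¹ • x) + (X * Ry) • ((‖x‖⁻¹ • x) - (‖y‖⁻¹ • y))))‖
          ≤ ‖(Fx - Fy) • xstar‖ + ‖(x - y)
            - ((X * Rx - X * Ry) • (‖x‖⁻¹ • x) + (X * Ry) • ((‖x‖⁻¹ • x) - (‖y‖⁻¹ • y)))‖ :=
            norm_add_le _ _
        _ ≤ ‖(Fx - Fy) • xstar‖ + (‖x - y‖
            + ‖(X * Rx - X * Ry) • (‖x‖⁻¹ • x) + (X * Ry) • ((‖x‖⁻¹ • x) - (‖y‖⁻¹ • y))‖) :=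
            add_le_add_right (norm_sub_le _ _) _
        _ ≤ ‖(Fx - Fy) • xstar‖ + (‖x - y‖
            + (‖(X * Rx - X * Ry) • (‖x‖⁻¹ • x)‖
              + ‖(X * Ry) • ((‖x‖⁻¹ • x) - (‖y‖⁻¹ • y))‖)) := by
            apply add_le_add_right
            exact add_le_add_right (norm_add_le _ _) _
        _ = |Fx - Fy| * X + (N + (X * |Rx - Ry|
              + X * (|Ry| * ‖(‖x‖⁻¹ • x) - (‖y‖⁻¹ • y)‖))) := by rw [e1, e2, e3]
    -- scalar estimates
    have t1 : |Fx - Fy| * X ≤ ((2 + D) * (π * M * N) / π) * X :=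
      mul_le_mul_of_nonneg_right hF hX0
    have t2 : X * |Rx - Ry|
        ≤ X * ((2 + 2*D/π + D + D*(D-1)/(2*π)) * (π * M * N) / π) :=
      mul_le_mul_of_nonneg_left hR hX0
    have t3 : |Ry| * ‖(‖x‖⁻¹ • x) - (‖y‖⁻¹ • y)‖ ≤ ((2 + D)/π) * (2 * M * N) :=
      mul_le_mul hRy hhat (norm_nonneg _) (by positivity)
    have t3' : X * (|Ry| * ‖(‖x‖⁻¹ • x) - (‖y‖⁻¹ • y)‖) ≤ X * (((2 + D)/π) * (2 * M * N)) :=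
      mul_le_mul_of_nonneg_left t3 hX0
    have hsum : |Fx - Fy| * X + (N + (X * |Rx - Ry|
          + X * (|Ry| * ‖(‖x‖⁻¹ • x) - (‖y‖⁻¹ • y)‖)))
        ≤ ((2*D + 4) + (4 + 4*D + D*(D-1)/2)/π) * (X * M * N) + N := by
      have heq : ((2 + D) * (π * M * N) / π) * X
            + (N + (X * ((2 + 2*D/π + D + D*(D-1)/(2*π)) * (π * M * N) / π)
              + X * (((2 + D)/π) * (2 * M * N))))
          = ((2*D + 4) + (4 + 4*D + D*(D-1)/2)/π) * (X * M * N) + N := by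
        field_simp
        ring
      linarith [t1, t2, t3', heq.le, heq.ge]
    -- the key polynomial inequality
    have hcoef : (2*D + 4) + (4 + 4*D + D*(D-1)/2)/π
        ≤ (2*D^2 + (10*π + 8)*D + 20*π)/π^2 := by
      rw [le_div_iff₀ (show (0:ℝ) < π^2 by positivity)]
      have heq2 : ((2*D + 4) + (4 + 4*D + D*(D-1)/2)/π) * π^2
          = (2*D + 4)*π^2 + (4 + 4*D + D*(D-1)/2)*π := by
        field_simp
      rw [heq2]
      have hA : (0:ℝ) ≤ (2 - π/2) * D^2 :=
        mul_nonneg (by nlinarith [Real.pi_lt_d2]) (sq_nonneg D)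
      have hB : (0:ℝ) ≤ (10*π + 8 - 2*π^2 - 4*π + π/2) * D :=
        mul_nonneg (by nlinarith [Real.pi_lt_d2, Real.pi_gt_d6, Real.pi_pos]) hD0
      have hC : (0:ℝ) ≤ 20*π - 4*π^2 - 4*π := by
        nlinarith [Real.pi_lt_d2, Real.pi_gt_d6]
      linarith [hA, hB, hC]
    have hQ : (0:ℝ) ≤ X * M * N := mul_nonneg (mul_nonneg hX0 hM0) hN0
    have hrhs : ((2 * D ^ 2 + (10 * π + 8) * D + 20 * π) * X / (π ^ 2 * 2 ^ d) * M + 1 / 2 ^ d) * N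
        = ((2:ℝ)^d)⁻¹ * ((2*D^2 + (10*π + 8)*D + 20*π)/π^2 * (X * M * N) + N) := by
      field_simp
    calc ((2:ℝ)^d)⁻¹ * ‖(Fx - Fy) • xstar + ((x - y)
            - ((X * Rx - X * Ry) • (‖x‖⁻¹ • x) + (X * Ry) • ((‖x‖⁻¹ • x) - (‖y‖⁻¹ • y))))‖
        ≤ ((2:ℝ)^d)⁻¹ * (((2*D + 4) + (4 + 4*D + D*(D-1)/2)/π) * (X * M * N) + N) := by
          apply mul_le_mul_of_nonneg_left (htri.trans hsum) (by positivity)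
      _ ≤ ((2:ℝ)^d)⁻¹ * ((2*D^2 + (10*π + 8)*D + 20*π)/π^2 * (X * M * N) + N) := by
          apply mul_le_mul_of_nonneg_left _ (by positivity)
          exact add_le_add_left (mul_le_mul_of_nonneg_right hcoef hQ) _
      _ = ((2 * D ^ 2 + (10 * π + 8) * D + 20 * π) * X / (π ^ 2 * 2 ^ d) * M + 1 / 2 ^ d) * N :=
          hrhs.symm
  refine ⟨hmain, ?_⟩
  intro r hr x y hxb hyb
  have hX0 : (0:ℝ) < ‖xstar‖ := norm_pos_iff.2 hxs
  rw [Metric.mem_closedBall, dist_zero_right, not_le] at hxb hyb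
  have hx : x ≠ 0 := by
    intro h; rw [h, norm_zero] at hxb; nlinarith
  have hy : y ≠ 0 := by
    intro h; rw [h, norm_zero] at hyb; nlinarith
  have hrX : (0:ℝ) < r * ‖xstar‖ := by positivity
  have hMle : max ‖x‖⁻¹ ‖y‖⁻¹ ≤ (r * ‖xstar‖)⁻¹ :=
    max_le (inv_anti₀ hrX hxb.le) (inv_anti₀ hrX hyb.le)
  have hXM : ‖xstar‖ * max ‖x‖⁻¹ ‖y‖⁻¹ ≤ r⁻¹ := by
    calc ‖xstar‖ * max ‖x‖⁻¹ ‖y‖⁻¹ ≤ ‖xstar‖ * (r * ‖xstar‖)⁻¹ :=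
          mul_le_mul_of_nonneg_left hMle hX0.le
      _ = r⁻¹ := by field_simp
  have hC0 : (0:ℝ) ≤ (2 * (d:ℝ) ^ 2 + (10 * π + 8) * (d:ℝ) + 20 * π) / (π ^ 2 * 2 ^ d) := by
    positivity
  have hstep : (2 * (d:ℝ) ^ 2 + (10 * π + 8) * d + 20 * π) * ‖xstar‖ / (π ^ 2 * 2 ^ d)
        * max ‖x‖⁻¹ ‖y‖⁻¹
      ≤ (2 * (d:ℝ) ^ 2 + (10 * π + 8) * d + 20 * π) / (r * π ^ 2 * 2 ^ d) := by
    have e1 : (2 * (d:ℝ) ^ 2 + (10 * π + 8) * d + 20 * π) * ‖xstar‖ / (π ^ 2 * 2 ^ d)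
          * max ‖x‖⁻¹ ‖y‖⁻¹
        = ((2 * (d:ℝ) ^ 2 + (10 * π + 8) * d + 20 * π) / (π ^ 2 * 2 ^ d))
          * (‖xstar‖ * max ‖x‖⁻¹ ‖y‖⁻¹) := by ring
    have e2 : ((2 * (d:ℝ) ^ 2 + (10 * π + 8) * d + 20 * π) / (π ^ 2 * 2 ^ d)) * r⁻¹
        = (2 * (d:ℝ) ^ 2 + (10 * π + 8) * d + 20 * π) / (r * π ^ 2 * 2 ^ d) := by
      ring
    rw [e1, ← e2]
    exact mul_le_mul_of_nonneg_left hXM hC0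
  calc ‖hvec d xstar x - hvec d xstar y‖
      ≤ ((2 * (d:ℝ) ^ 2 + (10 * π + 8) * d + 20 * π) * ‖xstar‖ / (π ^ 2 * 2 ^ d)
          * max ‖x‖⁻¹ ‖y‖⁻¹ + 1 / 2 ^ d) * ‖x - y‖ := hmain x y hx hy
    _ ≤ ((2 * (d:ℝ) ^ 2 + (10 * π + 8) * d + 20 * π) / (r * π ^ 2 * 2 ^ d) + 1 / 2 ^ d)
          * ‖x - y‖ :=
        mul_le_mul_of_nonneg_right (add_le_add_left hstep _) (norm_nonneg _)

end DPR
end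
end
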